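/- arXiv:1301.7520 — 7 statements merged into one kernel-verified Lean document; each statement's English description precedes it below -/
import Mathlib

section
/- For every λ ∈ ℂ with λ ≠ 1, all a, n ∈ ℕ with a, n ≥ 1, and all x, the identity H_{n-1}^{(n)}(x|λ) = (1-λ)^{-(a-1)n} · Σ_{l=0}^{(a-1)n} C((a-1)n, l) · (-λ)^{(a-1)n-l} · H_{n-1}^{(an)}(x+l|λ) holds as an identity of polynomials in x. -/
/-- The formal power series `e^{ct} = ∑_{m≥0} c^m t^m / m!` over `ℂ`. -/
noncomputable def expPS (c : ℂ) : PowerSeries ℂ :=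
  PowerSeries.mk fun m => c ^ m / (m.factorial : ℂ)

lemma expPS_eq (c : ℂ) : expPS c = PowerSeries.rescale c (PowerSeries.exp ℂ) := by
  ext m
  simp [expPS, PowerSeries.coeff_rescale, PowerSeries.coeff_exp, div_eq_mul_inv]

lemma expPS_add (c d : ℂ) : expPS (c + d) = expPS c * expPS d := by
  rw [expPS_eq, expPS_eq, expPS_eq, PowerSeries.exp_mul_exp_eq_exp_add]

lemma expPS_zero : expPS 0 = 1 := by
  ext m
  cases m <;> simp [expPS, PowerSeries.coeff_one]

lemma expPS_nat (l : ℕ) : expPS (l : ℂ) = (expPS 1) ^ l := by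
  induction l with
  | zero => simpa using expPS_zero
  | succ k ih =>
      have : ((k + 1 : ℕ) : ℂ) = (k : ℂ) + 1 := by push_cast; ring
      rw [this, expPS_add, ih, pow_succ]

/-- For `λ ≠ 1`, `a, n ≥ 1`, and all `x`,
`H_{n-1}^{(n)}(x|λ) = (1-λ)^{-(a-1)n} ∑_{l=0}^{(a-1)n} C((a-1)n, l) (-λ)^{(a-1)n-l}
H_{n-1}^{(an)}(x+l|λ)`, where the Frobenius–Euler polynomials `H_m^{(α)}(x|λ)` are
characterized by `((1-λ)/(e^t-λ))^α e^{xt} = ∑_m H_m^{(α)}(x|λ) t^m/m!`. -/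
theorem stmt0 (lam : ℂ) (hlam : lam ≠ 1) (a n : ℕ) (ha : 1 ≤ a) (hn : 1 ≤ n)
    (H : ℕ → ℕ → ℂ → ℂ)
    (hH : ∀ (α : ℕ) (x : ℂ),
      (expPS 1 - PowerSeries.C lam) ^ α *
          PowerSeries.mk (fun m => H α m x / (m.factorial : ℂ)) =
        PowerSeries.C (1 - lam) ^ α * expPS x) :
    ∀ x : ℂ,
      H n (n - 1) x =
        ((1 - lam) ^ ((a - 1) * n))⁻¹ *
          ∑ l ∈ Finset.range ((a - 1) * n + 1),
            (((a - 1) * n).choose l : ℂ) * (-lam) ^ ((a - 1) * n - l) *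
              H (a * n) (n - 1) (x + l) := by
  intro x
  have hsub : (1 : ℂ) - lam ≠ 0 := sub_ne_zero.mpr (Ne.symm hlam)
  set N := (a - 1) * n with hN
  have han : N + n = a * n := by
    rw [hN, Nat.sub_mul, one_mul]
    exact Nat.sub_add_cancel (Nat.le_mul_of_pos_left n (by omega))
  set E : PowerSeries ℂ := expPS 1 - PowerSeries.C lam with hE
  have hE0 : E ≠ 0 := by
    intro h
    apply hsub
    have := congrArg (PowerSeries.coeff 0) h
    simpa [hE, expPS] using this
  have hEan : E ^ (a * n) ≠ 0 := pow_ne_zero _ hE0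
  have hbin : E ^ N = ∑ l ∈ Finset.range (N + 1),
      PowerSeries.C ((N.choose l : ℂ) * (-lam) ^ (N - l)) * expPS (l : ℂ) := by
    have hE' : E = expPS 1 + PowerSeries.C (-lam) := by
      rw [hE, map_neg, sub_eq_add_neg]
    rw [hE', add_pow]
    refine Finset.sum_congr rfl fun l hl => ?_
    rw [expPS_nat, map_mul, map_pow, map_neg, map_natCast]
    push_cast
    ring
  have key : PowerSeries.C ((1 - lam) ^ N) *
      PowerSeries.mk (fun m => H n m x / (m.factorial : ℂ)) =
      ∑ l ∈ Finset.range (N + 1),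
        PowerSeries.C ((N.choose l : ℂ) * (-lam) ^ (N - l)) *
          PowerSeries.mk (fun m => H (a * n) m (x + l) / (m.factorial : ℂ)) := by
    apply mul_left_cancel₀ hEan
    have h2 : ∀ l : ℕ,
        E ^ (a * n) * PowerSeries.mk (fun m => H (a * n) m (x + l) / (m.factorial : ℂ))
          = PowerSeries.C (1 - lam) ^ (a * n) * (expPS x * expPS (l : ℂ)) := by
      intro l
      rw [← expPS_add]
      exact hH (a * n) (x + l)
    calc
      E ^ (a * n) * (PowerSeries.C ((1 - lam) ^ N) *
          PowerSeries.mk (fun m => H n m x / (m.factorial : ℂ)))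
          = PowerSeries.C (1 - lam) ^ N *
              (E ^ N * (E ^ n *
                PowerSeries.mk (fun m => H n m x / (m.factorial : ℂ)))) := by
            rw [← han, pow_add, map_pow]; ring
      _ = PowerSeries.C (1 - lam) ^ (a * n) * expPS x * E ^ N := by
            rw [hH n x, ← han, pow_add]; ring
      _ = ∑ l ∈ Finset.range (N + 1),
            PowerSeries.C ((N.choose l : ℂ) * (-lam) ^ (N - l)) *
              (PowerSeries.C (1 - lam) ^ (a * n) * (expPS x * expPS (l : ℂ))) := by
            rw [hbin, Finset.mul_sum]
            exact Finset.sum_congr rfl fun l hl => by ring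
      _ = E ^ (a * n) * ∑ l ∈ Finset.range (N + 1),
            PowerSeries.C ((N.choose l : ℂ) * (-lam) ^ (N - l)) *
              PowerSeries.mk (fun m => H (a * n) m (x + l) / (m.factorial : ℂ)) := by
            rw [Finset.mul_sum]
            exact Finset.sum_congr rfl fun l hl => by rw [← h2 l]; ring
  have key2 := congrArg (PowerSeries.coeff (n - 1)) key
  simp only [map_sum, PowerSeries.coeff_C_mul, PowerSeries.coeff_mk] at key2
  have hfac : ((n - 1).factorial : ℂ) ≠ 0 := Nat.cast_ne_zero.mpr (Nat.factorial_ne_zero _)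
  have hpow : ((1 : ℂ) - lam) ^ N ≠ 0 := pow_ne_zero _ hsub
  rw [eq_inv_mul_iff_mul_eq₀ hpow]
  calc
    (1 - lam) ^ N * H n (n - 1) x
        = ((1 - lam) ^ N * (H n (n - 1) x / ((n - 1).factorial : ℂ))) *
            ((n - 1).factorial : ℂ) := by
          field_simp
    _ = (∑ l ∈ Finset.range (N + 1),
          (N.choose l : ℂ) * (-lam) ^ (N - l) *
            (H (a * n) (n - 1) (x + l) / ((n - 1).factorial : ℂ))) *
            ((n - 1).factorial : ℂ) := by
          rw [key2]
    _ = ∑ l ∈ Finset.range (N + 1),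
          (N.choose l : ℂ) * (-lam) ^ (N - l) * H (a * n) (n - 1) (x + l) := by
          rw [Finset.sum_mul]
          exact Finset.sum_congr rfl fun l hl => by
            rw [mul_assoc, div_mul_cancel₀ _ hfac]
end

section
/- For every λ ∈ ℂ with λ ≠ 1 and λ ≠ 0, every integer n ≥ 1, every a ∈ ℤ_{≥0}, and all x, the identity Σ_{l=0}^{an} C(an, l) · (-λ)^{-l} · (x+l)^{n-1} = (1-λ)^{-n} · Σ_{l=0}^{(a+1)n} C((a+1)n, l) · (-λ)^{n-l} · H_{n-1}^{(n)}(x+l|λ) holds as an identity of polynomials in x. -/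
open PowerSeries Finset


lemma expPS_eq_s1 (c : ℂ) : expPS c = rescale c (exp ℂ) := by
  ext n
  simp [expPS, coeff_rescale, coeff_exp, div_eq_mul_inv, map_inv₀]

lemma expPS_mul (a b : ℂ) : expPS a * expPS b = expPS (a + b) := by
  rw [expPS_eq_s1, expPS_eq_s1, expPS_eq_s1, exp_mul_exp_eq_exp_add]

lemma expPS_pow (l : ℕ) : expPS 1 ^ l = expPS (l : ℂ) := by
  induction l with
  | zero =>
      ext n
      cases n <;> simp [expPS, PowerSeries.coeff_one]
  | succ k ih =>
      rw [pow_succ, ih, expPS_mul]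
      push_cast
      ring_nf

lemma sub_pow_expand (lam : ℂ) (k : ℕ) :
    (expPS 1 - PowerSeries.C (R := ℂ) lam) ^ k =
      ∑ l ∈ range (k + 1),
        PowerSeries.C (R := ℂ) ((k.choose l : ℂ) * (-lam) ^ (k - l)) * expPS (l : ℂ) := by
  rw [sub_eq_add_neg, add_pow]
  refine Finset.sum_congr rfl fun l hl => ?_
  rw [expPS_pow, ← map_neg, ← map_pow, map_mul, map_natCast]
  ring


lemma step (lam x : ℂ) (hl : lam ≠ 0) (k : ℕ) :
    PowerSeries.C (R := ℂ) ((-lam) ^ k) *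
      ∑ j ∈ range (k + 1),
        PowerSeries.C (R := ℂ) ((k.choose j : ℂ) * ((-lam) ^ j)⁻¹) * expPS (x + j) =
    (expPS 1 - PowerSeries.C (R := ℂ) lam) ^ k * expPS x := by
  rw [sub_pow_expand, Finset.mul_sum, Finset.sum_mul]
  refine Finset.sum_congr rfl fun j hj => ?_
  have hj' : j ≤ k := Nat.lt_succ_iff.mp (Finset.mem_range.mp hj)
  have hne : (-lam) ≠ 0 := neg_ne_zero.mpr hl
  rw [mul_assoc, expPS_mul, ← mul_assoc, ← map_mul]
  have hx : (↑j + x) = x + (j : ℂ) := by ring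
  rw [hx]
  congr 2
  rw [pow_sub₀ _ hne hj']
  field_simp

/-- For `λ ≠ 1`, `λ ≠ 0`, `n ≥ 1`, `a ∈ ℤ_{≥0}` and all `x`,
`∑_{l=0}^{an} C(an,l) (-λ)^{-l} (x+l)^{n-1}
  = (1-λ)^{-n} ∑_{l=0}^{(a+1)n} C((a+1)n,l) (-λ)^{n-l} H_{n-1}^{(n)}(x+l|λ)`,
where the Frobenius–Euler polynomials `H_m^{(α)}(x|λ)` are characterized by
`((1-λ)/(e^t-λ))^α e^{xt} = ∑_m H_m^{(α)}(x|λ) t^m/m!`. -/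
theorem stmt1 (lam : ℂ) (hlam : lam ≠ 1) (hlam0 : lam ≠ 0) (n : ℕ) (hn : 1 ≤ n) (a : ℕ)
    (H : ℕ → ℕ → ℂ → ℂ)
    (hH : ∀ (α : ℕ) (x : ℂ),
      (expPS 1 - PowerSeries.C (R := ℂ) lam) ^ α *
          PowerSeries.mk (fun m => H α m x / (m.factorial : ℂ)) =
        PowerSeries.C (R := ℂ) (1 - lam) ^ α * expPS x) :
    ∀ x : ℂ,
      ∑ l ∈ Finset.range (a * n + 1),
          ((a * n).choose l : ℂ) * (-lam) ^ (-(l : ℤ)) * (x + l) ^ (n - 1) =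
        ((1 - lam) ^ n)⁻¹ *
          ∑ l ∈ Finset.range ((a + 1) * n + 1),
            (((a + 1) * n).choose l : ℂ) * (-lam) ^ ((n : ℤ) - (l : ℤ)) *
              H n (n - 1) (x + l) := by
  intro x
  have hone : (1 : ℂ) - lam ≠ 0 := sub_ne_zero.mpr (Ne.symm hlam)
  have hnl : (-lam) ≠ 0 := neg_ne_zero.mpr hlam0
  set N := (a + 1) * n with hNdef
  have hN : N = a * n + n := by rw [hNdef]; ring
  set P := expPS 1 - PowerSeries.C (R := ℂ) lam with hP
  set S1 : PowerSeries ℂ := ∑ j ∈ range (a * n + 1),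
      PowerSeries.C (R := ℂ) (((a*n).choose j : ℂ) * ((-lam) ^ j)⁻¹) * expPS (x + j) with hS1
  set T : PowerSeries ℂ := ∑ l ∈ range (N + 1),
      PowerSeries.C (R := ℂ) ((N.choose l : ℂ) * ((-lam) ^ l)⁻¹) *
        PowerSeries.mk (fun m => H n m (x + l) / (m.factorial : ℂ)) with hT
  -- key power series identity
  have hPne : P ≠ 0 := by
    intro h
    have h0 := congrArg (PowerSeries.constantCoeff (R := ℂ)) h
    rw [hP, map_sub, map_zero, PowerSeries.constantCoeff_C,
      ← PowerSeries.coeff_zero_eq_constantCoeff_apply] at h0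
    simp [expPS] at h0
    exact hone (by rw [sub_eq_zero]; exact sub_eq_zero.mp h0)
  have key : PowerSeries.C (R := ℂ) ((1 - lam) ^ n) * S1 = PowerSeries.C (R := ℂ) ((-lam) ^ n) * T := by
    have hmul : PowerSeries.C (R := ℂ) ((-lam) ^ (a * n)) * (P ^ n * (PowerSeries.C (R := ℂ) ((1 - lam) ^ n) * S1))
        = PowerSeries.C (R := ℂ) ((-lam) ^ (a * n)) * (P ^ n * (PowerSeries.C (R := ℂ) ((-lam) ^ n) * T)) := by
      -- LHS
      have l1 : PowerSeries.C (R := ℂ) ((-lam) ^ (a * n)) * (P ^ n * (PowerSeries.C (R := ℂ) ((1 - lam) ^ n) * S1))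
          = PowerSeries.C (R := ℂ) ((1 - lam) ^ n) * (P ^ N * expPS x) := by
        have := step lam x hlam0 (a * n)
        calc PowerSeries.C (R := ℂ) ((-lam) ^ (a * n)) * (P ^ n * (PowerSeries.C (R := ℂ) ((1 - lam) ^ n) * S1))
            = PowerSeries.C (R := ℂ) ((1 - lam) ^ n) * (P ^ n * (PowerSeries.C (R := ℂ) ((-lam) ^ (a * n)) * S1)) := by ring
          _ = PowerSeries.C (R := ℂ) ((1 - lam) ^ n) * (P ^ n * (P ^ (a * n) * expPS x)) := by rw [this]
          _ = PowerSeries.C (R := ℂ) ((1 - lam) ^ n) * (P ^ N * expPS x) := by rw [hN, pow_add]; ring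
      -- RHS
      have l2 : PowerSeries.C (R := ℂ) ((-lam) ^ (a * n)) * (P ^ n * (PowerSeries.C (R := ℂ) ((-lam) ^ n) * T))
          = PowerSeries.C (R := ℂ) ((1 - lam) ^ n) * (P ^ N * expPS x) := by
        have hPT : P ^ n * T = PowerSeries.C (R := ℂ) ((1 - lam) ^ n) *
            ∑ l ∈ range (N + 1),
              PowerSeries.C (R := ℂ) ((N.choose l : ℂ) * ((-lam) ^ l)⁻¹) * expPS (x + l) := by
          rw [hT, Finset.mul_sum, Finset.mul_sum]
          refine Finset.sum_congr rfl fun l hl => ?_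
          have h1 := hH n (x + l)
          calc P ^ n * (PowerSeries.C (R := ℂ) ((N.choose l : ℂ) * ((-lam) ^ l)⁻¹) *
                PowerSeries.mk (fun m => H n m (x + l) / (m.factorial : ℂ)))
              = PowerSeries.C (R := ℂ) ((N.choose l : ℂ) * ((-lam) ^ l)⁻¹) *
                (P ^ n * PowerSeries.mk (fun m => H n m (x + l) / (m.factorial : ℂ))) := by ring
            _ = PowerSeries.C (R := ℂ) ((N.choose l : ℂ) * ((-lam) ^ l)⁻¹) *
                (PowerSeries.C (R := ℂ) (1 - lam) ^ n * expPS (x + l)) := by rw [h1]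
            _ = _ := by rw [← map_pow]; ring
        calc PowerSeries.C (R := ℂ) ((-lam) ^ (a * n)) * (P ^ n * (PowerSeries.C (R := ℂ) ((-lam) ^ n) * T))
            = PowerSeries.C (R := ℂ) ((-lam) ^ n) * (PowerSeries.C (R := ℂ) ((-lam) ^ (a * n)) * (P ^ n * T)) := by ring
          _ = PowerSeries.C (R := ℂ) ((-lam) ^ n) * (PowerSeries.C (R := ℂ) ((-lam) ^ (a * n)) *
              (PowerSeries.C (R := ℂ) ((1 - lam) ^ n) *
                ∑ l ∈ range (N + 1),
                  PowerSeries.C (R := ℂ) ((N.choose l : ℂ) * ((-lam) ^ l)⁻¹) * expPS (x + l))) := by rw [hPT]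
          _ = PowerSeries.C (R := ℂ) ((1 - lam) ^ n) * (PowerSeries.C (R := ℂ) ((-lam) ^ N) *
                ∑ l ∈ range (N + 1),
                  PowerSeries.C (R := ℂ) ((N.choose l : ℂ) * ((-lam) ^ l)⁻¹) * expPS (x + l)) := by
                rw [hN, pow_add, map_mul]; ring
          _ = PowerSeries.C (R := ℂ) ((1 - lam) ^ n) * (P ^ N * expPS x) := by rw [step lam x hlam0 N]
      rw [l1, l2]
    have hCne : PowerSeries.C (R := ℂ) ((-lam) ^ (a * n)) ≠ 0 := by
      simpa using pow_ne_zero (a * n) hnl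
    have h1 := mul_left_cancel₀ hCne hmul
    exact mul_left_cancel₀ (pow_ne_zero n hPne) h1
  -- extract coefficient n - 1
  have hc := congrArg (PowerSeries.coeff (R := ℂ) (n - 1)) key
  simp only [PowerSeries.coeff_C_mul, hS1, hT, map_sum, PowerSeries.coeff_C_mul,
    expPS, PowerSeries.coeff_mk] at hc
  -- hc : (1-lam)^n * ∑ j, (choose * inv) * ((x+j)^(n-1) / (n-1)!) = (-lam)^n * ∑ l, ... * (H ../(n-1)!)
  have hfac : ((n - 1).factorial : ℂ) ≠ 0 := Nat.cast_ne_zero.mpr (Nat.factorial_ne_zero _)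
  have key2 : (1 - lam) ^ n * ∑ j ∈ range (a * n + 1),
        ((a*n).choose j : ℂ) * ((-lam) ^ j)⁻¹ * (x + j) ^ (n - 1)
      = ∑ l ∈ range (N + 1), (N.choose l : ℂ) * ((-lam) ^ n * ((-lam) ^ l)⁻¹) * H n (n - 1) (x + l) := by
    have h2 := congrArg (· * ((n - 1).factorial : ℂ)) hc
    simp only [Finset.sum_mul, mul_assoc, div_mul_cancel₀ _ hfac] at h2
    calc (1 - lam) ^ n * ∑ j ∈ range (a * n + 1),
          ((a*n).choose j : ℂ) * ((-lam) ^ j)⁻¹ * (x + j) ^ (n - 1)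
        = (1 - lam) ^ n * ∑ j ∈ range (a * n + 1),
          ((a*n).choose j : ℂ) * (((-lam) ^ j)⁻¹ * (x + j) ^ (n - 1)) := by
          congr 1; exact Finset.sum_congr rfl fun j _ => by ring
      _ = (-lam) ^ n * ∑ l ∈ range (N + 1),
          (N.choose l : ℂ) * (((-lam) ^ l)⁻¹ * H n (n - 1) (x + l)) := h2
      _ = _ := by rw [Finset.mul_sum]; exact Finset.sum_congr rfl fun l _ => by ring
  -- finish
  have hz1 : ∀ l : ℕ, (-lam) ^ (-(l : ℤ)) = ((-lam) ^ l)⁻¹ := by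
    intro l; rw [zpow_neg, zpow_natCast]
  have hz2 : ∀ l : ℕ, (-lam) ^ ((n : ℤ) - (l : ℤ)) = (-lam) ^ n * ((-lam) ^ l)⁻¹ := by
    intro l; rw [zpow_sub₀ hnl, zpow_natCast, zpow_natCast, div_eq_mul_inv]
  simp only [hz1, hz2]
  rw [eq_inv_mul_iff_mul_eq₀ (pow_ne_zero n hone)]
  exact key2
end

section
/- For every integer n ≥ 1 and every integer l with 0 ≤ l ≤ n-1, the Stirling number of the first kind satisfies S₁(n, l+1) = C(n-1, l) · B_{n-1-l}^{(n)}, where B_m^{(n)} is the m-th Bernoulli number of order n. -/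
namespace Stmt3Aux

open PowerSeries

lemma s_ne : expPS 1 - 1 ≠ (0 : PowerSeries ℂ) := by
  intro h
  have := congrArg (coeff 1) h
  simp [expPS, coeff_one] at this

lemma expPS_zero : expPS 0 = 1 := by
  ext n; cases n <;> simp [expPS]

lemma expPS_add (x y : ℂ) : expPS x * expPS y = expPS (x + y) := by
  have h : ∀ c : ℂ, expPS c = rescale c (exp ℂ) := by
    intro c; ext n; simp [expPS, coeff_rescale, exp, div_eq_mul_inv]
  rw [h, h, h]
  exact exp_mul_exp_eq_exp_add x y

lemma expPS_deriv : d⁄dX ℂ (expPS 1) = expPS 1 := by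
  ext n
  rw [coeff_derivative]
  simp only [expPS, coeff_mk, one_pow]
  have h1 : ((n.factorial : ℂ)) ≠ 0 := Nat.cast_ne_zero.2 n.factorial_ne_zero
  have h2 : (((n+1).factorial : ℂ)) ≠ 0 := Nat.cast_ne_zero.2 (n+1).factorial_ne_zero
  rw [Nat.factorial_succ]
  rw [Nat.factorial_succ] at h2
  push_cast at h2 ⊢
  field_simp

lemma s_deriv : d⁄dX ℂ (expPS 1 - 1) = expPS 1 := by
  rw [map_sub, expPS_deriv, Derivation.map_one_eq_zero, sub_zero]

/-- The auxiliary polynomial whose evaluation is the order-`α` Bernoulli polynomial. -/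
noncomputable def Ppoly (B : ℕ → ℕ → ℂ → ℂ) (α m : ℕ) : Polynomial ℂ :=
  ∑ j ∈ Finset.range (m + 1),
    Polynomial.C ((m.choose (m - j) : ℂ) * B α (m - j) 0) * Polynomial.X ^ j

section
variable (B : ℕ → ℕ → ℂ → ℂ)
  (hB : ∀ (α : ℕ) (x : ℂ),
      (expPS 1 - 1) ^ α *
          PowerSeries.mk (fun m => B α m x / (m.factorial : ℂ)) =
        PowerSeries.X ^ α * expPS x)

include hB

lemma hA (α : ℕ) :
    (expPS 1 - 1) ^ α * PowerSeries.mk (fun m => B α m 0 / (m.factorial : ℂ)) =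
      PowerSeries.X ^ α := by
  have := hB α 0
  rwa [expPS_zero, mul_one] at this

lemma shiftB (α : ℕ) (x : ℂ) :
    PowerSeries.mk (fun m => B α m x / (m.factorial : ℂ)) =
      PowerSeries.mk (fun m => B α m 0 / (m.factorial : ℂ)) * expPS x := by
  apply mul_left_cancel₀ (pow_ne_zero α s_ne)
  rw [hB α x, ← mul_assoc, hA B hB α]

lemma diffB (α : ℕ) (x : ℂ) :
    PowerSeries.mk (fun m => B (α + 1) m (x + 1) / (m.factorial : ℂ)) -
      PowerSeries.mk (fun m => B (α + 1) m x / (m.factorial : ℂ)) =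
      PowerSeries.X * PowerSeries.mk (fun m => B α m x / (m.factorial : ℂ)) := by
  apply mul_left_cancel₀ (pow_ne_zero (α + 1) s_ne)
  rw [mul_sub, hB, hB]
  have h1 : expPS (x + 1) = expPS x * expPS 1 := by rw [expPS_add]
  rw [h1]
  have := hB α x
  calc PowerSeries.X ^ (α+1) * (expPS x * expPS 1) - PowerSeries.X ^ (α+1) * expPS x
      = (expPS 1 - 1) * PowerSeries.X * (PowerSeries.X ^ α * expPS x) := by ring
    _ = (expPS 1 - 1) * PowerSeries.X *
        ((expPS 1 - 1) ^ α * PowerSeries.mk (fun m => B α m x / (m.factorial : ℂ))) := by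
        rw [this]
    _ = (expPS 1 - 1) ^ (α+1) *
        (PowerSeries.X * PowerSeries.mk (fun m => B α m x / (m.factorial : ℂ))) := by ring

lemma anchor (k : ℕ) :
    (coeff (k + 1))
      (PowerSeries.mk (fun m => B (k + 2) m 0 / (m.factorial : ℂ)) * expPS 1) = 0 := by
  set s : PowerSeries ℂ := expPS 1 - 1 with hs
  set A1 := PowerSeries.mk (fun m => B (k + 1) m 0 / (m.factorial : ℂ)) with hA1
  set A2 := PowerSeries.mk (fun m => B (k + 2) m 0 / (m.factorial : ℂ)) with hA2
  have h1 : s ^ (k + 1) * A1 = PowerSeries.X ^ (k + 1) := hA B hB (k + 1)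
  have h2 : s ^ (k + 2) * A2 = PowerSeries.X ^ (k + 2) := hA B hB (k + 2)
  have hd := congrArg (d⁄dX ℂ) h1
  rw [Derivation.leibniz, Derivation.leibniz_pow, Derivation.leibniz_pow, s_deriv,
    derivative_X] at hd
  simp only [smul_eq_mul, nsmul_eq_mul, Nat.add_sub_cancel, mul_one] at hd
  have hcast : ((k + 1 : ℕ) : PowerSeries ℂ) = C ((k : ℂ) + 1) := by
    rw [← map_natCast (C (R := ℂ)) (k + 1)]; push_cast; ring_nf
  have h3 : s ^ (k + 2) * (d⁄dX ℂ A1) =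
      C ((k : ℂ) + 1) * (PowerSeries.X ^ k * s) -
        C ((k : ℂ) + 1) * (PowerSeries.X ^ (k + 1) * expPS 1) := by
    rw [← hcast]
    linear_combination (norm := ring_nf) s * hd - ((k + 1 : ℕ) : PowerSeries ℂ) * expPS 1 * h1
  have h4 : C ((k : ℂ) + 1) * (A2 * expPS 1) =
      C ((k : ℂ) + 1) * A1 - PowerSeries.X * (d⁄dX ℂ A1) := by
    apply mul_left_cancel₀ (pow_ne_zero (k + 2) s_ne)
    rw [← hs]
    linear_combination (norm := ring_nf)
      C ((k : ℂ) + 1) * expPS 1 * h2 - C ((k : ℂ) + 1) * s * h1 + PowerSeries.X * h3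
  have h5 := congrArg (coeff (k + 1)) h4
  rw [coeff_C_mul, map_sub, coeff_C_mul, coeff_succ_X_mul, coeff_derivative] at h5
  have h6 : ((k : ℂ) + 1) * (coeff (k + 1)) (A2 * expPS 1) = 0 := by
    rw [h5]; ring
  have h7 : ((k : ℂ) + 1) ≠ 0 := Nat.cast_add_one_ne_zero k
  exact (mul_eq_zero.1 h6).resolve_left h7

lemma evalP (α m : ℕ) (x : ℂ) : (Ppoly B α m).eval x = B α m x := by
  have h := congrArg (coeff m) (shiftB B hB α x)
  rw [coeff_mk, coeff_mul, Finset.Nat.sum_antidiagonal_eq_sum_range_succ_mk,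
    ← Finset.sum_range_reflect] at h
  simp only [coeff_mk, expPS, Nat.succ_sub_one, Nat.add_sub_cancel] at h
  have hm : ((m.factorial : ℂ)) ≠ 0 := Nat.cast_ne_zero.2 m.factorial_ne_zero
  rw [div_eq_iff hm] at h
  rw [Ppoly, Polynomial.eval_finset_sum, h, Finset.sum_mul]
  apply Finset.sum_congr rfl
  intro j hj
  have hjm : j ≤ m := Nat.lt_succ_iff.1 (Finset.mem_range.1 hj)
  have h1 : m - (m - j) = j := Nat.sub_sub_self hjm
  have hc : ((m.choose (m - j) : ℂ)) =
      (m.factorial : ℂ) / ((m - j).factorial * (m - (m - j)).factorial) :=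
    Nat.cast_choose ℂ (Nat.sub_le m j)
  rw [h1] at hc
  have hj1 : ((j.factorial : ℂ)) ≠ 0 := Nat.cast_ne_zero.2 j.factorial_ne_zero
  have hj2 : (((m - j).factorial : ℂ)) ≠ 0 := Nat.cast_ne_zero.2 (m - j).factorial_ne_zero
  simp only [Polynomial.eval_mul, Polynomial.eval_C, Polynomial.eval_pow, Polynomial.eval_X, h1,
    hc]
  field_simp

lemma coreB : ∀ (k : ℕ) (x : ℂ), B (k + 1) k x = ∏ i ∈ Finset.range k, (x - (i + 1)) := by
  intro k
  induction k with
  | zero =>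
    intro x
    have h := congrArg (coeff 1) (hB 1 x)
    rw [pow_one, pow_one] at h
    have hL : (coeff 1) ((expPS 1 - 1) * PowerSeries.mk (fun m => B 1 m x / (m.factorial : ℂ)))
        = B 1 0 x := by
      rw [sub_mul, one_mul, map_sub, coeff_mul, Finset.Nat.sum_antidiagonal_eq_sum_range_succ_mk]
      simp [expPS, Finset.sum_range_succ, Nat.factorial]
    have hR : (coeff 1) (PowerSeries.X * expPS x) = 1 := by
      rw [show (1:ℕ) = 0 + 1 by rfl, coeff_succ_X_mul]
      simp [expPS]
    rw [hL, hR] at h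
    simpa using h
  | succ k IH =>
    intro x
    set d : Polynomial ℂ :=
      Ppoly B (k + 2) (k + 1) -
        ∏ i ∈ Finset.range (k + 1), (Polynomial.X - Polynomial.C ((i : ℂ) + 1))
      with hd
    have heval : ∀ y : ℂ,
        d.eval y = B (k + 2) (k + 1) y - ∏ i ∈ Finset.range (k + 1), (y - (i + 1)) := by
      intro y
      rw [hd, Polynomial.eval_sub, evalP B hB, Polynomial.eval_prod]
      simp
    have hdiffval : ∀ y : ℂ, B (k + 2) (k + 1) (y + 1) - B (k + 2) (k + 1) y
        = ((k : ℂ) + 1) * ∏ i ∈ Finset.range k, (y - (i + 1)) := by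
      intro y
      have h := congrArg (coeff (k + 1)) (diffB B hB (k + 1) y)
      rw [map_sub, coeff_mk, coeff_mk, coeff_succ_X_mul, coeff_mk] at h
      have hfac : (((k+1).factorial : ℂ)) ≠ 0 := Nat.cast_ne_zero.2 (k+1).factorial_ne_zero
      have hfk : ((k.factorial : ℂ)) ≠ 0 := Nat.cast_ne_zero.2 k.factorial_ne_zero
      rw [div_sub_div_same, div_eq_div_iff hfac hfk] at h
      rw [IH y] at h
      have : ((k+1).factorial : ℂ) = ((k:ℂ)+1) * (k.factorial : ℂ) := by
        rw [Nat.factorial_succ]; push_cast; ring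
      rw [this] at h
      apply mul_right_cancel₀ hfk
      linear_combination h
    have hshift : ∀ y : ℂ, d.eval (y + 1) = d.eval y := by
      intro y
      rw [heval, heval]
      have h2 : ∏ i ∈ Finset.range (k + 1), (y + 1 - ((i:ℂ) + 1))
          = (∏ i ∈ Finset.range k, (y - ((i:ℂ) + 1))) * y := by
        have e1 : ∏ i ∈ Finset.range (k + 1), (y + 1 - ((i:ℂ) + 1))
            = ∏ i ∈ Finset.range (k + 1), (y - (i:ℂ)) :=
          Finset.prod_congr rfl (by intro i _; ring)
        rw [e1, Finset.prod_range_succ' (fun i => y - (i:ℂ)) k]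
        simp only [Nat.cast_add, Nat.cast_one, Nat.cast_zero]
        ring
      have h3 : ∏ i ∈ Finset.range (k + 1), (y - ((i:ℂ) + 1))
          = (∏ i ∈ Finset.range k, (y - ((i:ℂ) + 1))) * (y - ((k:ℂ) + 1)) :=
        Finset.prod_range_succ _ _
      rw [h2, h3]
      linear_combination hdiffval y
    have hone : d.eval 1 = 0 := by
      rw [heval]
      have hB1 : B (k + 2) (k + 1) 1 = 0 := by
        have h := congrArg (coeff (k + 1)) (shiftB B hB (k + 2) 1)
        rw [anchor B hB, coeff_mk] at h
        have hfac : (((k+1).factorial : ℂ)) ≠ 0 := Nat.cast_ne_zero.2 (k+1).factorial_ne_zero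
        exact (div_eq_zero_iff.1 h).resolve_right hfac
      have hprod : ∏ i ∈ Finset.range (k + 1), ((1:ℂ) - ((i:ℂ) + 1)) = 0 := by
        apply Finset.prod_eq_zero (Finset.mem_range.2 (Nat.succ_pos k))
        simp
      rw [hB1, hprod, sub_zero]
    have hall : ∀ m : ℕ, d.eval (1 + (m : ℂ)) = 0 := by
      intro m
      induction m with
      | zero => simpa using hone
      | succ m ih =>
        have : (1 + ((m+1 : ℕ) : ℂ)) = (1 + (m:ℂ)) + 1 := by push_cast; ring
        rw [this, hshift, ih]
    have hdzero : d = 0 := by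
      apply Polynomial.eq_zero_of_infinite_isRoot
      apply Set.infinite_of_injective_forall_mem (f := fun m : ℕ => 1 + (m : ℂ))
      · intro a b hab
        have : (a : ℂ) = b := by simpa using hab
        exact_mod_cast this
      · intro m
        exact hall m
    have := heval x
    rw [hdzero] at this
    simp only [Polynomial.eval_zero] at this
    linear_combination -this

end

end Stmt3Aux

/-- For every integer `n ≥ 1` and `0 ≤ l ≤ n-1`,
`S₁(n, l+1) = C(n-1, l) · B_{n-1-l}^{(n)}`, where the Bernoulli polynomials of order `α`
are characterized by `(t/(e^t-1))^α e^{xt} = ∑_m B_m^{(α)}(x) t^m/m!` (and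
`B_m^{(α)} = B_m^{(α)}(0)`), and the Stirling numbers of the first kind `S₁(m,l)` by
`x(x-1)⋯(x-m+1) = ∑_{l=0}^m S₁(m,l) x^l`. -/
theorem stmt3 (n l : ℕ) (hn : 1 ≤ n) (hl : l ≤ n - 1)
    (S1 : ℕ → ℕ → ℂ)
    (hS1 : ∀ (m : ℕ) (x : ℂ),
      ∏ i ∈ Finset.range m, (x - i) = ∑ j ∈ Finset.range (m + 1), S1 m j * x ^ j)
    (B : ℕ → ℕ → ℂ → ℂ)
    (hB : ∀ (α : ℕ) (x : ℂ),
      (expPS 1 - 1) ^ α *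
          PowerSeries.mk (fun m => B α m x / (m.factorial : ℂ)) =
        PowerSeries.X ^ α * expPS x) :
    S1 n (l + 1) = ((n - 1).choose l : ℂ) * B n (n - 1 - l) 0 := by
  obtain ⟨k, rfl⟩ : ∃ k, n = k + 1 := ⟨n - 1, (Nat.succ_pred_eq_of_pos hn).symm⟩
  simp only [Nat.add_sub_cancel] at hl ⊢
  -- the two polynomials
  set L : Polynomial ℂ :=
    ∑ j ∈ Finset.range (k + 2), Polynomial.C (S1 (k + 1) j) * Polynomial.X ^ j with hLdef
  set R : Polynomial ℂ := Polynomial.X * Stmt3Aux.Ppoly B (k + 1) k with hRdef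
  have hLR : L = R := by
    apply Polynomial.funext
    intro x
    have hLx : L.eval x = ∑ j ∈ Finset.range (k + 2), S1 (k + 1) j * x ^ j := by
      rw [hLdef, Polynomial.eval_finset_sum]
      simp
    have hRx : R.eval x = x * B (k + 1) k x := by
      rw [hRdef, Polynomial.eval_mul, Polynomial.eval_X, Stmt3Aux.evalP B hB]
    rw [hLx, hRx, ← hS1 (k + 1) x, Stmt3Aux.coreB B hB k x,
      Finset.prod_range_succ' (fun i => x - (i : ℂ)) k]
    simp only [Nat.cast_add, Nat.cast_one, Nat.cast_zero]
    ring
  have hcoeff := congrArg (fun p => Polynomial.coeff p (l + 1)) hLR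
  simp only [hLdef, hRdef] at hcoeff
  rw [Polynomial.finset_sum_coeff, Polynomial.coeff_X_mul, Stmt3Aux.Ppoly,
    Polynomial.finset_sum_coeff] at hcoeff
  have hL1 : ∀ j ∈ Finset.range (k + 2),
      (Polynomial.C (S1 (k + 1) j) * Polynomial.X ^ j).coeff (l + 1) =
        if l + 1 = j then S1 (k + 1) j else 0 := by
    intro j _
    rw [Polynomial.coeff_C_mul, Polynomial.coeff_X_pow]
    split_ifs with h <;> simp
  have hR1 : ∀ b ∈ Finset.range (k + 1),
      (Polynomial.C ((k.choose (k - b) : ℂ) * B (k + 1) (k - b) 0) * Polynomial.X ^ b).coeff l =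
        if l = b then (k.choose (k - b) : ℂ) * B (k + 1) (k - b) 0 else 0 := by
    intro b _
    rw [Polynomial.coeff_C_mul, Polynomial.coeff_X_pow]
    split_ifs with h <;> simp
  rw [Finset.sum_congr rfl hL1, Finset.sum_congr rfl hR1, Finset.sum_ite_eq,
    Finset.sum_ite_eq] at hcoeff
  rw [if_pos (Finset.mem_range.2 (by omega)), if_pos (Finset.mem_range.2 (by omega))] at hcoeff
  rw [hcoeff, Nat.choose_symm hl]
end

section
/- For every λ ∈ ℂ with λ ≠ 1, every integer n ≥ 1, every a ∈ ℤ_{≥0}, and all x, the identity (1-λ)^{-an} · Σ_{l=0}^{an} C(an, l) · (-λ)^{an-l} · H_{n-1}^{(an)}(x+l|λ) = Σ_{l=0}^{n-1} Σ_{k=0}^{l} (C(l,k)/C(k+n, n)) · S₁(n-1, l) · S₂(k+n, n) · (x-1)^{l-k} holds as an identity of polynomials in x. -/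
open PowerSeries Finset

namespace Stmt4Aux


@[simp] lemma coeff_expPS (c : ℂ) (m : ℕ) :
    PowerSeries.coeff m (expPS c) = c ^ m / (m.factorial : ℂ) := by
  simp [expPS]

lemma expPS_mul (a b : ℂ) : expPS a * expPS b = expPS (a + b) := by
  ext m
  rw [PowerSeries.coeff_mul, Finset.Nat.sum_antidiagonal_eq_sum_range_succ_mk]
  simp only [coeff_expPS]
  rw [add_pow]
  rw [Finset.sum_div]
  refine Finset.sum_congr rfl fun k hk => ?_
  have hk' : k ≤ m := Nat.lt_succ_iff.mp (Finset.mem_range.mp hk)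
  rw [Nat.cast_choose ℂ hk']
  have h1 : (k.factorial : ℂ) ≠ 0 := Nat.cast_ne_zero.mpr k.factorial_ne_zero
  have h2 : ((m - k).factorial : ℂ) ≠ 0 := Nat.cast_ne_zero.mpr (m - k).factorial_ne_zero
  have h3 : (m.factorial : ℂ) ≠ 0 := Nat.cast_ne_zero.mpr m.factorial_ne_zero
  field_simp

lemma expPS_zero : expPS 0 = 1 := by
  ext m
  cases m <;> simp [coeff_expPS, PowerSeries.coeff_one]

lemma expPS_pow (l : ℕ) : (expPS 1) ^ l = expPS l := by
  induction l with
  | zero => simpa using expPS_zero.symm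
  | succ k ih =>
      rw [pow_succ, ih, expPS_mul]
      push_cast; ring_nf

@[simp] lemma constantCoeff_expPS (c : ℂ) : PowerSeries.constantCoeff (expPS c) = 1 := by
  rw [← PowerSeries.coeff_zero_eq_constantCoeff_apply]
  simp





-- LHS lemma
lemma lhs_eval (lam : ℂ) (hlam : lam ≠ 1) (α : ℕ) (m : ℕ) (x : ℂ)
    (H : ℕ → ℕ → ℂ → ℂ)
    (hH : ∀ (β : ℕ) (y : ℂ),
      (expPS 1 - PowerSeries.C lam) ^ β *
          PowerSeries.mk (fun k => H β k y / (k.factorial : ℂ)) =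
        PowerSeries.C (1 - lam) ^ β * expPS y) :
    ∑ l ∈ Finset.range (α + 1),
      (α.choose l : ℂ) * (-lam) ^ (α - l) * H α m (x + l) = (1 - lam) ^ α * x ^ m := by
  set f : PowerSeries ℂ := expPS 1 - PowerSeries.C lam with hf
  have hf0 : PowerSeries.constantCoeff f ≠ 0 := by
    simp [hf, constantCoeff_expPS, sub_ne_zero]
    exact fun h => hlam h.symm
  have hfne : f ≠ 0 := fun h => hf0 (by rw [h]; simp)
  -- the binomial expansion of f^α
  have hbin : f ^ α = ∑ l ∈ Finset.range (α + 1),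
      PowerSeries.C ((α.choose l : ℂ) * (-lam) ^ (α - l)) * (expPS 1) ^ l := by
    rw [hf, sub_eq_add_neg, add_pow]
    refine Finset.sum_congr rfl fun l hl => ?_
    have hneg : (-(PowerSeries.C lam)) = PowerSeries.C (-lam) := by rw [map_neg]
    rw [hneg, ← map_pow, ← map_natCast (PowerSeries.C) (α.choose l), map_mul]
    ring
  -- main computation
  set SS : PowerSeries ℂ := ∑ l ∈ Finset.range (α + 1),
      PowerSeries.C ((α.choose l : ℂ) * (-lam) ^ (α - l)) *
        PowerSeries.mk (fun k => H α k (x + l) / (k.factorial : ℂ)) with hSS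
  have key : f ^ α * SS = f ^ α * (PowerSeries.C ((1 - lam) ^ α) * expPS x) := by
    rw [hSS, Finset.mul_sum]
    have : ∀ l ∈ Finset.range (α + 1),
        f ^ α * (PowerSeries.C ((α.choose l : ℂ) * (-lam) ^ (α - l)) *
          PowerSeries.mk (fun k => H α k (x + l) / (k.factorial : ℂ)))
        = PowerSeries.C ((α.choose l : ℂ) * (-lam) ^ (α - l)) *
            (PowerSeries.C (1 - lam) ^ α * (expPS x * (expPS 1) ^ l)) := by
      intro l _
      rw [mul_left_comm, hH α (x + l)]
      rw [expPS_pow, expPS_mul]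
    rw [Finset.sum_congr rfl this]
    have : ∑ l ∈ Finset.range (α + 1),
        PowerSeries.C ((α.choose l : ℂ) * (-lam) ^ (α - l)) *
            (PowerSeries.C (1 - lam) ^ α * (expPS x * (expPS 1) ^ l))
        = (PowerSeries.C (1 - lam) ^ α * expPS x) * f ^ α := by
      rw [hbin, Finset.mul_sum]
      refine Finset.sum_congr rfl fun l _ => ?_
      ring
    rw [this, map_pow]; ring
  have hcancel : SS = PowerSeries.C ((1 - lam) ^ α) * expPS x :=
    mul_left_cancel₀ (pow_ne_zero _ hfne) key
  have := congrArg (PowerSeries.coeff m) hcancel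
  rw [PowerSeries.coeff_C_mul] at this
  simp only [coeff_expPS] at this
  rw [map_sum] at this
  simp only [PowerSeries.coeff_C_mul, PowerSeries.coeff_mk] at this
  have hfac : (m.factorial : ℂ) ≠ 0 := Nat.cast_ne_zero.mpr m.factorial_ne_zero
  have := congrArg (fun z => z * (m.factorial : ℂ)) this
  simp only [Finset.sum_mul] at this
  calc ∑ l ∈ Finset.range (α + 1), (α.choose l : ℂ) * (-lam) ^ (α - l) * H α m (x + l)
      = ∑ l ∈ Finset.range (α + 1),
          (α.choose l : ℂ) * (-lam) ^ (α - l) * (H α m (x + l) / (m.factorial : ℂ))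
            * (m.factorial : ℂ) := by
        refine Finset.sum_congr rfl fun l _ => ?_
        field_simp
    _ = (1 - lam) ^ α * (x ^ m / (m.factorial : ℂ)) * (m.factorial : ℂ) := this
    _ = (1 - lam) ^ α * x ^ m := by field_simp



/-- the falling-factorial polynomial ∏_{i<m} (X - i) -/
noncomputable def Q (m : ℕ) : Polynomial ℂ :=
  ∏ i ∈ Finset.range m, (Polynomial.X - Polynomial.C (i : ℂ))

lemma Q_eval (m : ℕ) (z : ℂ) : (Q m).eval z = ∏ i ∈ Finset.range m, (z - i) := by
  rw [Q, Polynomial.eval_prod]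
  refine Finset.prod_congr rfl fun i _ => ?_
  simp

lemma Q_succ (m : ℕ) : Q (m + 1) = Q m * (Polynomial.X - Polynomial.C (m : ℂ)) := by
  rw [Q, Finset.prod_range_succ]; rfl

lemma Q_natDegree_le (m : ℕ) : (Q m).natDegree ≤ m := by
  refine le_trans (Polynomial.natDegree_prod_le _ _) ?_
  calc ∑ i ∈ Finset.range m, (Polynomial.X - Polynomial.C (i : ℂ)).natDegree
      ≤ ∑ i ∈ Finset.range m, 1 := by
        refine Finset.sum_le_sum fun i _ => ?_
        exact le_trans (Polynomial.natDegree_sub_le _ _) (by simp)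
    _ = m := by simp

/-- S1 values are the coefficients of Q -/
lemma S1_eq_Q_coeff (S1 : ℕ → ℕ → ℂ)
    (hS1 : ∀ (m : ℕ) (x : ℂ),
      ∏ i ∈ Finset.range m, (x - i) = ∑ j ∈ Finset.range (m + 1), S1 m j * x ^ j)
    (m j : ℕ) (hj : j < m + 1) : S1 m j = (Q m).coeff j := by
  have hP : Q m = ∑ j ∈ Finset.range (m + 1), Polynomial.C (S1 m j) * Polynomial.X ^ j := by
    apply Polynomial.funext
    intro z
    rw [Q_eval, hS1]
    simp [Polynomial.eval_finset_sum]
  rw [hP, Polynomial.finset_sum_coeff]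
  rw [Finset.sum_eq_single j]
  · simp
  · intro b _ hbj
    simp [Polynomial.coeff_C_mul, Polynomial.coeff_X_pow, Ne.symm hbj]
  · intro h; exact absurd hj (by simpa using h)



/-- Λ = log(1+u)/u -/
noncomputable def Lam : PowerSeries ℂ :=
  PowerSeries.mk fun m => (-1) ^ m / ((m : ℂ) + 1)

lemma constantCoeff_Lam : PowerSeries.constantCoeff Lam = 1 := by
  rw [← PowerSeries.coeff_zero_eq_constantCoeff_apply]
  simp [Lam]

lemma Lam_ne_zero : Lam ≠ 0 := fun h => by
  have := constantCoeff_Lam; rw [h] at this; simp at this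

/-- Θ = u/log(1+u) -/
noncomputable def Th : PowerSeries ℂ := Lam⁻¹

lemma Lam_mul_Th : Lam * Th = 1 :=
  PowerSeries.mul_inv_cancel Lam (by rw [constantCoeff_Lam]; exact one_ne_zero)

lemma constantCoeff_Th : PowerSeries.constantCoeff Th = 1 := by
  have := congrArg (PowerSeries.constantCoeff) Lam_mul_Th
  rw [map_mul, constantCoeff_Lam, one_mul, map_one] at this
  exact this

/-- L = log(1+u) -/
noncomputable def L : PowerSeries ℂ := PowerSeries.X * Lam

lemma L_mul_Th : L * Th = PowerSeries.X := by
  rw [L, mul_assoc, Lam_mul_Th, mul_one]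

/-- derivative of L -/
lemma deriv_L : d⁄dX ℂ L = PowerSeries.mk fun m => (-1) ^ m := by
  ext m
  rw [PowerSeries.coeff_derivative]
  rw [L, PowerSeries.coeff_succ_X_mul]
  simp only [Lam, PowerSeries.coeff_mk]
  have : ((m : ℂ) + 1) ≠ 0 := by
    have h := Nat.cast_ne_zero (R := ℂ).mpr (Nat.succ_ne_zero m)
    push_cast at h; exact h
  field_simp

lemma one_add_X_mul_deriv_L : (1 + PowerSeries.X) * d⁄dX ℂ L = 1 := by
  rw [deriv_L]
  ext m
  rw [add_mul, one_mul, map_add]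
  cases m with
  | zero => simp [PowerSeries.coeff_zero_X_mul]
  | succ k =>
      rw [PowerSeries.coeff_succ_X_mul]
      simp [PowerSeries.coeff_one, pow_succ]

/-- coeff m (X * d⁄dX F) = m * coeff m F -/
lemma coeff_X_mul_deriv (F : PowerSeries ℂ) (m : ℕ) :
    PowerSeries.coeff m (PowerSeries.X * d⁄dX ℂ F) = m * PowerSeries.coeff m F := by
  cases m with
  | zero => simp [PowerSeries.coeff_zero_X_mul]
  | succ k =>
      rw [PowerSeries.coeff_succ_X_mul, PowerSeries.coeff_derivative]
      push_cast; ring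

/-- vanishing of low coefficients of L^l -/
lemma coeff_L_pow_eq_zero {m l : ℕ} (h : m < l) :
    PowerSeries.coeff m (L ^ l) = 0 := by
  have : L ^ l = PowerSeries.X ^ l * Lam ^ l := by rw [L, mul_pow]
  rw [this, PowerSeries.coeff_X_pow_mul']
  simp [Nat.not_le_of_lt h, not_le.mpr h]

/-- the key identity linking Q-coefficients with coefficients of powers of L -/
lemma StL : ∀ m j : ℕ, (j.factorial : ℂ) * (Q m).coeff j
    = (m.factorial : ℂ) * PowerSeries.coeff m (L ^ j) := by
  intro m
  induction m with
  | zero =>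
      intro j
      cases j with
      | zero => simp [Q]
      | succ i =>
          rw [coeff_L_pow_eq_zero (Nat.succ_pos i)]
          have : (Q 0).coeff (i+1) = 0 := by
            rw [show Q 0 = 1 from rfl]
            simp [Polynomial.coeff_one]
          rw [this]; ring
  | succ m ih =>
      intro j
      cases j with
      | zero =>
          have h1 : (Q (m+1)).coeff 0 = (Q m).coeff 0 * (-(m:ℂ)) := by
            rw [Q_succ, Polynomial.mul_coeff_zero]
            simp
          have h2 : (Q m).coeff 0 * (-(m:ℂ)) = 0 := by
            cases m with
            | zero => simp
            | succ k =>
                have := ih 0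
                simp only [Nat.factorial_zero, Nat.cast_one, one_mul, pow_zero] at this
                rw [PowerSeries.coeff_one] at this
                simp at this
                rw [this]; ring
          rw [pow_zero, PowerSeries.coeff_one]
          simp [h1, h2]
      | succ i =>
          have hD : (1 + PowerSeries.X) * d⁄dX ℂ (L ^ (i+1)) = (i+1 : ℕ) • L ^ i := by
            rw [Derivation.leibniz_pow]
            rw [mul_smul_comm]
            congr 1
            have : (i + 1 - 1) = i := rfl
            rw [this, smul_eq_mul,
              show (1 + PowerSeries.X) * (L ^ i * d⁄dX ℂ L)
                = L ^ i * ((1 + PowerSeries.X) * d⁄dX ℂ L) by ring,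
              one_add_X_mul_deriv_L, mul_one]
          have hdag := congrArg (PowerSeries.coeff m) hD
          rw [add_mul, one_mul, map_add, coeff_X_mul_deriv, PowerSeries.coeff_derivative,
            map_nsmul] at hdag
          -- hdag : coeff (m+1) (L^(i+1)) * (m+1) + m * coeff m (L^(i+1)) = (i+1) • coeff m (L^i)
          rw [nsmul_eq_mul] at hdag
          have hB := ih i
          have hC := ih (i+1)
          have hQc : (Q (m+1)).coeff (i+1) = (Q m).coeff i - (m : ℂ) * (Q m).coeff (i+1) := by
            rw [Q_succ, mul_sub, Polynomial.coeff_sub, Polynomial.coeff_mul_X,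
              Polynomial.coeff_mul_C]
            ring
          rw [hQc]
          rw [Nat.factorial_succ, Nat.factorial_succ]
          push_cast
          rw [Nat.factorial_succ] at hC
          push_cast at hdag hB hC
          linear_combination ((i:ℂ)+1) * hB - (m:ℂ) * hC - (m.factorial : ℂ) * hdag



lemma coeff_L_pow_mul_eq_zero {m N : ℕ} (h : m < N) (w : PowerSeries ℂ) :
    PowerSeries.coeff m (L ^ N * w) = 0 := by
  rw [show L ^ N * w = PowerSeries.X ^ N * (Lam ^ N * w) by rw [L, mul_pow]; ring,
    PowerSeries.coeff_X_pow_mul']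
  simp [not_le.mpr h]

/-- substitution of L into a power series -/
noncomputable def sub (A : PowerSeries ℂ) : PowerSeries ℂ :=
  PowerSeries.mk fun m =>
    PowerSeries.coeff m (Polynomial.aeval L (PowerSeries.trunc (m + 1) A))

lemma coeff_aeval_congr {p q : Polynomial ℂ} {N : ℕ}
    (h : ∀ d, d < N → p.coeff d = q.coeff d) {m : ℕ} (hm : m < N) :
    PowerSeries.coeff m (Polynomial.aeval L p) = PowerSeries.coeff m (Polynomial.aeval L q) := by
  have hdvd : (Polynomial.X : Polynomial ℂ) ^ N ∣ p - q := by
    rw [Polynomial.X_pow_dvd_iff]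
    intro d hd
    rw [Polynomial.coeff_sub, h d hd, sub_self]
  obtain ⟨r, hr⟩ := hdvd
  have : Polynomial.aeval L p - Polynomial.aeval L q = L ^ N * Polynomial.aeval L r := by
    rw [← map_sub, hr, map_mul, map_pow, Polynomial.aeval_X]
  have h2 := congrArg (PowerSeries.coeff m) this
  rw [map_sub, coeff_L_pow_mul_eq_zero hm] at h2
  exact sub_eq_zero.mp h2

lemma sub_stab (A : PowerSeries ℂ) {m N : ℕ} (hm : m < N) :
    PowerSeries.coeff m (sub A)
      = PowerSeries.coeff m (Polynomial.aeval L (PowerSeries.trunc N A)) := by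
  rw [sub, PowerSeries.coeff_mk]
  refine coeff_aeval_congr (fun d hd => ?_) (Nat.lt_succ_self m)
  rw [PowerSeries.coeff_trunc, PowerSeries.coeff_trunc, if_pos hd, if_pos (lt_of_lt_of_le hd (Nat.succ_le_of_lt hm))]

lemma sub_coeff (A : PowerSeries ℂ) (m : ℕ) :
    PowerSeries.coeff m (sub A)
      = ∑ l ∈ Finset.range (m + 1), PowerSeries.coeff l A * PowerSeries.coeff m (L ^ l) := by
  rw [sub, PowerSeries.coeff_mk]
  rw [Polynomial.aeval_eq_sum_range' (PowerSeries.natDegree_trunc_lt A m)]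
  rw [map_sum]
  refine Finset.sum_congr rfl fun l hl => ?_
  rw [PowerSeries.coeff_smul, PowerSeries.coeff_trunc, if_pos (Finset.mem_range.mp hl)]
  rw [smul_eq_mul]

lemma sub_mul (A B : PowerSeries ℂ) : sub (A * B) = sub A * sub B := by
  ext m
  rw [PowerSeries.coeff_mul]
  have hstep : ∀ pq ∈ Finset.HasAntidiagonal.antidiagonal m,
      PowerSeries.coeff pq.1 (sub A) * PowerSeries.coeff pq.2 (sub B)
      = PowerSeries.coeff pq.1 (Polynomial.aeval L (PowerSeries.trunc (m+1) A))
        * PowerSeries.coeff pq.2 (Polynomial.aeval L (PowerSeries.trunc (m+1) B)) := by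
    intro pq hpq
    have h := Finset.HasAntidiagonal.mem_antidiagonal.mp hpq
    rw [sub_stab A (show pq.1 < m + 1 by omega), sub_stab B (show pq.2 < m + 1 by omega)]
  rw [Finset.sum_congr rfl hstep, ← PowerSeries.coeff_mul, ← map_mul]
  rw [sub, PowerSeries.coeff_mk]
  refine coeff_aeval_congr (fun d hd => ?_) (Nat.lt_succ_self m)
  rw [PowerSeries.coeff_trunc, if_pos hd]
  rw [PowerSeries.coeff_mul_eq_coeff_trunc_mul_trunc₂ A B hd hd, ← Polynomial.coe_mul,
    Polynomial.coeff_coe]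

lemma sub_one : sub 1 = 1 := by
  ext m
  rw [sub_coeff]
  rw [Finset.sum_eq_single 0]
  · simp
  · intro b _ hb
    rw [PowerSeries.coeff_one, if_neg hb]; ring
  · intro hc; simp at hc

lemma sub_pow (A : PowerSeries ℂ) (k : ℕ) : sub (A ^ k) = (sub A) ^ k := by
  induction k with
  | zero => simpa using sub_one
  | succ j ih => rw [pow_succ, pow_succ, sub_mul, ih]

lemma sub_X : sub PowerSeries.X = L := by
  ext m
  rw [sub_coeff]
  cases m with
  | zero =>
      rw [Finset.sum_range_one]
      simp [L, PowerSeries.coeff_zero_X_mul]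
  | succ k =>
      rw [Finset.sum_eq_single 1]
      · simp
      · intro b _ hb
        rw [PowerSeries.coeff_X, if_neg hb]; ring
      · intro hc
        exfalso; apply hc
        exact Finset.mem_range.mpr (by omega)

lemma sub_sub' (A B : PowerSeries ℂ) : sub (A - B) = sub A - sub B := by
  ext m
  rw [map_sub, sub_coeff, sub_coeff, sub_coeff, ← Finset.sum_sub_distrib]
  refine Finset.sum_congr rfl fun l _ => ?_
  rw [map_sub]; ring


/-- the binomial series (1+u)^c -/
noncomputable def B (c : ℂ) : PowerSeries ℂ :=
  PowerSeries.mk fun m => (Q m).eval c / (m.factorial : ℂ)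

lemma coeff_B (c : ℂ) (m : ℕ) :
    PowerSeries.coeff m (B c) = (Q m).eval c / (m.factorial : ℂ) := by simp [B]

lemma constantCoeff_B (c : ℂ) : PowerSeries.constantCoeff (B c) = 1 := by
  rw [← PowerSeries.coeff_zero_eq_constantCoeff_apply, coeff_B]
  simp [Q]

lemma B_one : B 1 = 1 + PowerSeries.X := by
  ext m
  rw [coeff_B]
  match m with
  | 0 => simp [Q]
  | 1 =>
      rw [Q_eval]
      simp
  | (k+2) =>
      rw [Q_eval]
      rw [Finset.prod_eq_zero (Finset.mem_range.mpr (show 1 < k+2 by omega))]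
      · rw [map_add, PowerSeries.coeff_one, PowerSeries.coeff_X]
        simp
      · simp
      
lemma B_deriv (c : ℂ) :
    (1 + PowerSeries.X) * d⁄dX ℂ (B c) = PowerSeries.C c * B c := by
  ext m
  rw [add_mul, one_mul, map_add, coeff_X_mul_deriv, PowerSeries.coeff_derivative,
    PowerSeries.coeff_C_mul]
  simp only [coeff_B]
  rw [Q_succ, Polynomial.eval_mul, Nat.factorial_succ]
  have h1 : (m.factorial : ℂ) ≠ 0 := Nat.cast_ne_zero.mpr m.factorial_ne_zero
  have h2 : ((m : ℂ) + 1) ≠ 0 := by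
    have h := Nat.cast_ne_zero (R := ℂ).mpr (Nat.succ_ne_zero m)
    push_cast at h; exact h
  simp only [Polynomial.eval_sub, Polynomial.eval_X, Polynomial.eval_C]
  push_cast
  field_simp
  ring

lemma Th_deriv :
    (1 + PowerSeries.X) * (PowerSeries.X * d⁄dX ℂ Th)
      = (1 + PowerSeries.X) * Th - Th ^ 2 := by
  have h1 : L * d⁄dX ℂ Th + Th * d⁄dX ℂ L = 1 := by
    have := congrArg (d⁄dX ℂ) L_mul_Th
    rw [Derivation.leibniz, PowerSeries.derivative_X, smul_eq_mul, smul_eq_mul] at this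
    linear_combination this
  -- multiply by (1+X) and use one_add_X_mul_deriv_L
  have h2 : (1 + PowerSeries.X) * (L * d⁄dX ℂ Th) + Th = 1 + PowerSeries.X := by
    have := congrArg (fun z => (1 + PowerSeries.X) * z) h1
    simp only [mul_add, mul_one] at this
    calc (1 + PowerSeries.X) * (L * d⁄dX ℂ Th) + Th
        = (1 + PowerSeries.X) * (L * d⁄dX ℂ Th)
          + Th * ((1 + PowerSeries.X) * d⁄dX ℂ L) := by rw [one_add_X_mul_deriv_L, mul_one]
      _ = 1 + PowerSeries.X := by linear_combination this
  have h3 := congrArg (fun z => Th * z) h2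
  simp only [mul_add] at h3
  calc (1 + PowerSeries.X) * (PowerSeries.X * d⁄dX ℂ Th)
      = Th * ((1 + PowerSeries.X) * (L * d⁄dX ℂ Th)) := by
        rw [show Th * ((1 + PowerSeries.X) * (L * d⁄dX ℂ Th))
          = (1 + PowerSeries.X) * ((L * Th) * d⁄dX ℂ Th) by ring, L_mul_Th]
    _ = (1 + PowerSeries.X) * Th - Th ^ 2 := by
        have : Th * ((1 + PowerSeries.X) * (L * d⁄dX ℂ Th)) + Th * Th
            = Th * (1 + PowerSeries.X) := by rw [← mul_add, h2]
        linear_combination this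

/-- key induction: `k! [u^k] (1+u)^c (u/log(1+u))^{k+1} = (c+1)^k` -/
lemma FL : ∀ (k : ℕ) (c : ℂ),
    (k.factorial : ℂ) * PowerSeries.coeff k (B c * Th ^ (k+1)) = (c+1) ^ k := by
  intro k
  induction k with
  | zero =>
      intro c
      rw [pow_one, pow_zero]
      rw [PowerSeries.coeff_zero_eq_constantCoeff]
      rw [map_mul, constantCoeff_B, constantCoeff_Th]
      simp
  | succ k ih =>
      intro c
      set F := B c * Th ^ (k+1) with hF
      have hDF : d⁄dX ℂ F = d⁄dX ℂ (B c) * Th ^ (k+1)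
          + PowerSeries.C ((k:ℂ)+1) * (Th ^ k * d⁄dX ℂ Th) * B c := by
        rw [hF, Derivation.leibniz, Derivation.leibniz_pow]
        rw [smul_eq_mul, smul_eq_mul, smul_eq_mul, nsmul_eq_mul]
        rw [show ((k+1 : ℕ) : PowerSeries ℂ) = PowerSeries.C ((k:ℂ)+1) by
          rw [← map_natCast (PowerSeries.C) (k+1)]; push_cast; ring]
        rw [show (k + 1 - 1) = k from rfl]
        ring
      have hser : PowerSeries.C ((k:ℂ)+1) * (B c * Th ^ (k+2))
          = PowerSeries.C ((k:ℂ)+1) * ((1+PowerSeries.X) * F)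
            + PowerSeries.C c * (PowerSeries.X * F)
            - (1+PowerSeries.X) * (PowerSeries.X * d⁄dX ℂ F) := by
        linear_combination ((1+PowerSeries.X)*PowerSeries.X) * hDF
          + (PowerSeries.X * Th^(k+1)) * B_deriv c
          + (PowerSeries.C ((k:ℂ)+1) * B c * Th^k) * Th_deriv
      have e1 : PowerSeries.coeff (k+1) ((1+PowerSeries.X) * F)
          = PowerSeries.coeff (k+1) F + PowerSeries.coeff k F := by
        rw [add_mul, one_mul, map_add, PowerSeries.coeff_succ_X_mul]
      have e2 : PowerSeries.coeff (k+1) ((1+PowerSeries.X) * (PowerSeries.X * d⁄dX ℂ F))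
          = ((k:ℂ)+1) * PowerSeries.coeff (k+1) F + (k:ℂ) * PowerSeries.coeff k F := by
        rw [add_mul, one_mul, map_add, coeff_X_mul_deriv, PowerSeries.coeff_succ_X_mul,
          coeff_X_mul_deriv]
        push_cast; ring
      have e3 : PowerSeries.coeff (k+1) (PowerSeries.X * F) = PowerSeries.coeff k F :=
        PowerSeries.coeff_succ_X_mul k F
      have hco := congrArg (PowerSeries.coeff (k+1)) hser
      rw [PowerSeries.coeff_C_mul, map_sub, map_add, PowerSeries.coeff_C_mul,
        PowerSeries.coeff_C_mul, e1, e2, e3] at hco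
      have ihc := ih c
      rw [← hF] at ihc
      rw [Nat.factorial_succ, show (k+1+1) = (k+2) from rfl]
      push_cast
      linear_combination (k.factorial : ℂ) * hco + (c+1) * ihc



lemma sub_expPS (c : ℂ) : sub (expPS c) = B c := by
  ext m
  rw [sub_coeff, B, PowerSeries.coeff_mk]
  have hm : (m.factorial : ℂ) ≠ 0 := Nat.cast_ne_zero.mpr m.factorial_ne_zero
  rw [eq_div_iff hm]
  rw [Polynomial.eval_eq_sum_range' (lt_of_le_of_lt (Q_natDegree_le m) (Nat.lt_succ_self m))]
  rw [Finset.sum_mul]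
  refine Finset.sum_congr rfl fun l _ => ?_
  have hl : (l.factorial : ℂ) ≠ 0 := Nat.cast_ne_zero.mpr l.factorial_ne_zero
  have h := StL m l
  rw [expPS, PowerSeries.coeff_mk]
  field_simp
  linear_combination (-(c ^ l)) * h

lemma L_ne_zero : L ≠ 0 := by
  intro h
  have := congrArg (PowerSeries.coeff 1) h
  rw [L, PowerSeries.coeff_succ_X_mul] at this
  simp [Lam] at this

section main
variable (n : ℕ) (S2 : ℕ → ℕ → ℂ)

/-- the series G with X^n G = (e^t-1)^n -/
noncomputable def G : PowerSeries ℂ :=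
  PowerSeries.mk fun k => S2 (k+n) n * (n.factorial : ℂ) / ((k+n).factorial : ℂ)

lemma hG (hS2 : ∀ m : ℕ,
      (expPS 1 - 1) ^ m =
        PowerSeries.C (m.factorial : ℂ) *
          PowerSeries.mk (fun l => S2 l m / (l.factorial : ℂ))) :
    PowerSeries.X ^ n * G n S2 = (expPS 1 - 1) ^ n := by
  ext m
  rw [PowerSeries.coeff_X_pow_mul']
  have hrhs : PowerSeries.coeff m ((expPS 1 - 1) ^ n)
      = (n.factorial : ℂ) * (S2 m n / (m.factorial : ℂ)) := by
    rw [hS2 n, PowerSeries.coeff_C_mul, PowerSeries.coeff_mk]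
  by_cases h : n ≤ m
  · rw [if_pos h, hrhs, G, PowerSeries.coeff_mk]
    rw [Nat.sub_add_cancel h]
    ring
  · rw [if_neg h]
    have hdvd : (PowerSeries.X : PowerSeries ℂ) ^ n ∣ (expPS 1 - 1) ^ n := by
      apply pow_dvd_pow_of_dvd
      rw [PowerSeries.X_dvd_iff]
      rw [map_sub, map_one, ← PowerSeries.coeff_zero_eq_constantCoeff_apply]
      simp [expPS]
    rw [PowerSeries.X_pow_dvd_iff] at hdvd
    exact (hdvd m (not_le.mp h)).symm

lemma sub_G (hS2 : ∀ m : ℕ,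
      (expPS 1 - 1) ^ m =
        PowerSeries.C (m.factorial : ℂ) *
          PowerSeries.mk (fun l => S2 l m / (l.factorial : ℂ))) :
    sub (G n S2) = Th ^ n := by
  have h1 : L ^ n * sub (G n S2) = PowerSeries.X ^ n := by
    have := congrArg sub (hG n S2 hS2)
    rw [sub_mul, sub_pow, sub_X, sub_pow, sub_sub', sub_one] at this
    rw [this]
    have hE1 : sub (expPS 1) = 1 + PowerSeries.X := by rw [sub_expPS, B_one]
    rw [hE1]
    ring
  have h2 : L ^ n * Th ^ n = PowerSeries.X ^ n := by
    rw [← mul_pow, L_mul_Th]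
  exact mul_left_cancel₀ (pow_ne_zero n L_ne_zero) (h1.trans h2.symm)

/-- RHS evaluation -/
lemma rhs_eval (hn : 1 ≤ n)
    (hS2 : ∀ m : ℕ,
      (expPS 1 - 1) ^ m =
        PowerSeries.C (m.factorial : ℂ) *
          PowerSeries.mk (fun l => S2 l m / (l.factorial : ℂ)))
    (S1 : ℕ → ℕ → ℂ)
    (hS1 : ∀ (m : ℕ) (x : ℂ),
      ∏ i ∈ Finset.range m, (x - i) = ∑ j ∈ Finset.range (m + 1), S1 m j * x ^ j)
    (x : ℂ) :
    ∑ l ∈ Finset.range n, ∑ k ∈ Finset.range (l + 1),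
        ((l.choose k : ℂ) / ((k + n).choose n : ℂ)) * S1 (n - 1) l * S2 (k + n) n *
          (x - 1) ^ (l - k)
      = x ^ (n - 1) := by
  set A : PowerSeries ℂ := G n S2 * expPS (x - 1) with hA
  -- inner sums
  have hinner : ∀ l ∈ Finset.range n,
      ∑ k ∈ Finset.range (l + 1),
        ((l.choose k : ℂ) / ((k + n).choose n : ℂ)) * S1 (n - 1) l * S2 (k + n) n *
          (x - 1) ^ (l - k)
      = S1 (n - 1) l * ((l.factorial : ℂ) * PowerSeries.coeff l A) := by
    intro l _
    rw [hA, PowerSeries.coeff_mul, Finset.Nat.sum_antidiagonal_eq_sum_range_succ_mk,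
      Finset.mul_sum, Finset.mul_sum]
    refine Finset.sum_congr rfl fun k hk => ?_
    have hkl : k ≤ l := Nat.lt_succ_iff.mp (Finset.mem_range.mp hk)
    rw [G, PowerSeries.coeff_mk, expPS, PowerSeries.coeff_mk]
    rw [Nat.cast_choose ℂ hkl, Nat.cast_choose ℂ (show n ≤ k + n by omega)]
    have e1 : (k + n) - n = k := by omega
    rw [e1]
    have ne1 : (l.factorial : ℂ) ≠ 0 := Nat.cast_ne_zero.mpr l.factorial_ne_zero
    have ne2 : (k.factorial : ℂ) ≠ 0 := Nat.cast_ne_zero.mpr k.factorial_ne_zero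
    have ne3 : ((l-k).factorial : ℂ) ≠ 0 := Nat.cast_ne_zero.mpr (l-k).factorial_ne_zero
    have ne4 : ((k+n).factorial : ℂ) ≠ 0 := Nat.cast_ne_zero.mpr (k+n).factorial_ne_zero
    have ne5 : (n.factorial : ℂ) ≠ 0 := Nat.cast_ne_zero.mpr n.factorial_ne_zero
    field_simp
  rw [Finset.sum_congr rfl hinner]
  -- outer sum
  have houter : ∀ l ∈ Finset.range n,
      S1 (n - 1) l * ((l.factorial : ℂ) * PowerSeries.coeff l A)
      = ((n-1).factorial : ℂ) * (PowerSeries.coeff l A * PowerSeries.coeff (n-1) (L ^ l)) := by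
    intro l hl
    have hl' : l < (n-1) + 1 := by have := Finset.mem_range.mp hl; omega
    rw [S1_eq_Q_coeff S1 hS1 (n-1) l hl']
    have h := StL (n-1) l
    linear_combination PowerSeries.coeff l A * h
  rw [Finset.sum_congr rfl houter, ← Finset.mul_sum]
  have hrange : Finset.range n = Finset.range ((n-1) + 1) := by
    congr 1; omega
  rw [hrange, ← sub_coeff A (n-1)]
  have hsubA : sub A = Th ^ n * B (x - 1) := by
    rw [hA, sub_mul, sub_G n S2 hS2, sub_expPS]
  rw [hsubA]
  have hfl := FL (n-1) (x-1)
  rw [show (n-1) + 1 = n by omega] at hfl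
  rw [show Th ^ n * B (x-1) = B (x-1) * Th ^ n by ring, hfl]
  ring_nf

end main

end Stmt4Aux

open Stmt4Aux in
/-- For `λ ≠ 1`, `n ≥ 1`, `a ∈ ℤ_{≥0}` and all `x`,
`(1-λ)^{-an} ∑_{l=0}^{an} C(an,l) (-λ)^{an-l} H_{n-1}^{(an)}(x+l|λ)
  = ∑_{l=0}^{n-1} ∑_{k=0}^{l} (C(l,k)/C(k+n,n)) S₁(n-1,l) S₂(k+n,n) (x-1)^{l-k}`.
Here `H_m^{(α)}(x|λ)` is characterized by
`((1-λ)/(e^t-λ))^α e^{xt} = ∑_m H_m^{(α)}(x|λ) t^m/m!`, the Stirling numbers of the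
second kind `S₂(l,m)` by `(e^t-1)^m = m! ∑_l S₂(l,m) t^l/l!`, and the Stirling numbers
of the first kind `S₁(m,l)` by `x(x-1)⋯(x-m+1) = ∑_{l=0}^m S₁(m,l) x^l`. -/
theorem stmt4 (lam : ℂ) (hlam : lam ≠ 1) (n : ℕ) (hn : 1 ≤ n) (a : ℕ)
    (H : ℕ → ℕ → ℂ → ℂ)
    (hH : ∀ (α : ℕ) (x : ℂ),
      (expPS 1 - PowerSeries.C lam) ^ α *
          PowerSeries.mk (fun m => H α m x / (m.factorial : ℂ)) =
        PowerSeries.C (1 - lam) ^ α * expPS x)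
    (S1 : ℕ → ℕ → ℂ)
    (hS1 : ∀ (m : ℕ) (x : ℂ),
      ∏ i ∈ Finset.range m, (x - i) = ∑ j ∈ Finset.range (m + 1), S1 m j * x ^ j)
    (S2 : ℕ → ℕ → ℂ)
    (hS2 : ∀ m : ℕ,
      (expPS 1 - 1) ^ m =
        PowerSeries.C (m.factorial : ℂ) *
          PowerSeries.mk (fun l => S2 l m / (l.factorial : ℂ))) :
    ∀ x : ℂ,
      ((1 - lam) ^ (a * n))⁻¹ *
          ∑ l ∈ Finset.range (a * n + 1),
            ((a * n).choose l : ℂ) * (-lam) ^ (a * n - l) * H (a * n) (n - 1) (x + l) =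
        ∑ l ∈ Finset.range n, ∑ k ∈ Finset.range (l + 1),
          ((l.choose k : ℂ) / ((k + n).choose n : ℂ)) * S1 (n - 1) l * S2 (k + n) n *
            (x - 1) ^ (l - k) := by
  intro x
  have hL := lhs_eval lam hlam (a * n) (n - 1) x H hH
  have hR := rhs_eval n S2 hn hS2 S1 hS1 x
  rw [hL, hR]
  have h1l : (1 : ℂ) - lam ≠ 0 := sub_ne_zero.mpr (Ne.symm hlam)
  rw [inv_mul_cancel_left₀ (pow_ne_zero _ h1l)]
end

section
/- For every λ ∈ ℂ, every n ∈ ℤ_{≥0}, and every x, the identity of formal power series in t holds: e^{-xt} · (e^t - λ)^n = Σ_{l=0}^{n} Σ_{k=0}^{∞} ( Σ_{j=0}^{k} C(n,l) · (1-λ)^{n-l} · (C(k,j)/C(j+l, l)) · S₂(j+l, l) · (-1)^{k-j} · x^{k-j} ) · t^{k+l}/k!. -/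
/-- For every `λ ∈ ℂ`, `n ∈ ℤ_{≥0}` and every `x`, the formal power
series identity
`e^{-xt} (e^t - λ)^n = ∑_{l=0}^{n} ∑_{k=0}^{∞}
  (∑_{j=0}^{k} C(n,l) (1-λ)^{n-l} (C(k,j)/C(j+l,l)) S₂(j+l,l) (-1)^{k-j} x^{k-j})
  t^{k+l}/k!`
holds, where the Stirling numbers of the second kind `S₂(l,m)` are characterized by
`(e^t-1)^m = m! ∑_l S₂(l,m) t^l/l!`. -/
theorem stmt6 (lam : ℂ) (n : ℕ) (x : ℂ)
    (S2 : ℕ → ℕ → ℂ)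
    (hS2 : ∀ m : ℕ,
      (expPS 1 - 1) ^ m =
        PowerSeries.C (m.factorial : ℂ) *
          PowerSeries.mk (fun l => S2 l m / (l.factorial : ℂ))) :
    expPS (-x) * (expPS 1 - PowerSeries.C lam) ^ n =
      ∑ l ∈ Finset.range (n + 1),
        PowerSeries.X ^ l *
          PowerSeries.mk (fun k =>
            (∑ j ∈ Finset.range (k + 1),
                (n.choose l : ℂ) * (1 - lam) ^ (n - l) *
                  ((k.choose j : ℂ) / ((j + l).choose l : ℂ)) * S2 (j + l) l *
                  (-1) ^ (k - j) * x ^ (k - j)) /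
              (k.factorial : ℂ)) := by
  have hfac : ∀ m : ℕ, (m.factorial : ℂ) ≠ 0 :=
    fun m => Nat.cast_ne_zero.mpr m.factorial_ne_zero
  have hXdvd : (PowerSeries.X : PowerSeries ℂ) ∣ (expPS 1 - 1) := by
    rw [PowerSeries.X_dvd_iff]; simp [expPS]
  have hS2zero : ∀ l m : ℕ, m < l → S2 m l = 0 := by
    intro l m hm
    have h2 := PowerSeries.X_pow_dvd_iff.mp (pow_dvd_pow_of_dvd hXdvd l) m hm
    rw [hS2 l] at h2
    simp only [PowerSeries.coeff_C_mul, PowerSeries.coeff_mk, mul_eq_zero,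
      div_eq_zero_iff] at h2
    rcases h2 with h | h | h
    · exact absurd h (hfac l)
    · exact h
    · exact absurd h (hfac m)
  -- rewrite the binomial
  have hsplit : expPS 1 - PowerSeries.C lam
      = (expPS 1 - 1) + PowerSeries.C (1 - lam) := by
    rw [map_sub, map_one]; ring
  rw [hsplit, add_pow, Finset.mul_sum]
  refine Finset.sum_congr rfl fun l _ => ?_
  -- per-l identity
  ext N
  rcases lt_or_ge N l with hlt | hle
  · -- both sides vanish in low degrees
    have h1 : (PowerSeries.X : PowerSeries ℂ) ^ l ∣
        expPS (-x) * ((expPS 1 - 1) ^ l * PowerSeries.C (1 - lam) ^ (n - l) *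
          (n.choose l : PowerSeries ℂ)) :=
      Dvd.dvd.mul_left (Dvd.dvd.mul_right (Dvd.dvd.mul_right
        (pow_dvd_pow_of_dvd hXdvd l) _) _) _
    have h2 : (PowerSeries.X : PowerSeries ℂ) ^ l ∣
        PowerSeries.X ^ l * PowerSeries.mk (fun k =>
          (∑ j ∈ Finset.range (k + 1),
              (n.choose l : ℂ) * (1 - lam) ^ (n - l) *
                ((k.choose j : ℂ) / ((j + l).choose l : ℂ)) * S2 (j + l) l *
                (-1) ^ (k - j) * x ^ (k - j)) / (k.factorial : ℂ)) :=
      Dvd.dvd.mul_right dvd_rfl _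
    rw [PowerSeries.X_pow_dvd_iff.mp h1 N hlt, PowerSeries.X_pow_dvd_iff.mp h2 N hlt]
  · obtain ⟨k, rfl⟩ := Nat.exists_eq_add_of_le' hle  -- N = k + l
    rw [PowerSeries.coeff_X_pow_mul, PowerSeries.coeff_mk]
    -- collect constants on the left
    have hre : expPS (-x) * ((expPS 1 - 1) ^ l * PowerSeries.C (1 - lam) ^ (n - l) *
          (n.choose l : PowerSeries ℂ))
        = PowerSeries.C ((l.factorial : ℂ) * (1 - lam) ^ (n - l) * (n.choose l : ℂ)) *
          (PowerSeries.mk (fun m => S2 m l / (m.factorial : ℂ)) * expPS (-x)) := by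
      rw [hS2 l, ← map_natCast (PowerSeries.C (R := ℂ)) (n.choose l)]
      simp only [map_mul, map_pow, map_natCast]
      ring
    rw [hre, PowerSeries.coeff_C_mul, PowerSeries.coeff_mul,
      Finset.Nat.sum_antidiagonal_eq_sum_range_succ_mk]
    simp only [PowerSeries.coeff_mk, expPS]
    rw [show (k + l).succ = l + (k + 1) by omega, Finset.sum_range_add]
    have hz : ∑ m ∈ Finset.range l,
        S2 m l / (m.factorial : ℂ) * ((-x) ^ (k + l - m) / ((k + l - m).factorial : ℂ)) = 0 := by
      apply Finset.sum_eq_zero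
      intro m hm
      rw [hS2zero l m (Finset.mem_range.mp hm)]
      simp
    rw [hz, zero_add, Finset.mul_sum, Finset.sum_div]
    refine Finset.sum_congr rfl fun j hj => ?_
    have hjk : j ≤ k := Nat.lt_succ_iff.mp (Finset.mem_range.mp hj)
    have hnat : l.factorial * ((j + l).choose l) * k.factorial
        = k.choose j * (j + l).factorial * (k - j).factorial := by
      rw [← Nat.choose_mul_factorial_mul_factorial hjk,
        ← Nat.choose_mul_factorial_mul_factorial (Nat.le_add_left l j)]
      simp [Nat.add_sub_cancel]
      ring
    have hcast : (l.factorial : ℂ) * ((j + l).choose l : ℂ) * (k.factorial : ℂ)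
        = (k.choose j : ℂ) * ((j + l).factorial : ℂ) * ((k - j).factorial : ℂ) := by
      exact_mod_cast congrArg (Nat.cast : ℕ → ℂ) hnat
    have hC : ((j + l).choose l : ℂ) ≠ 0 :=
      Nat.cast_ne_zero.mpr (Nat.choose_pos (Nat.le_add_left l j)).ne'
    have hfrac : (l.factorial : ℂ) / (((j + l).factorial : ℂ) * ((k - j).factorial : ℂ))
        = (k.choose j : ℂ) / (((j + l).choose l : ℂ) * (k.factorial : ℂ)) := by
      rw [div_eq_div_iff (mul_ne_zero (hfac _) (hfac _)) (mul_ne_zero hC (hfac _))]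
      linear_combination hcast
    rw [show l + j = j + l by ring, show k + l - (j + l) = k - j by omega, neg_pow]
    linear_combination ((n.choose l : ℂ) * (1 - lam) ^ (n - l) * S2 (j + l) l *
      (-1) ^ (k - j) * x ^ (k - j)) * hfrac
end

section
/- For every λ ∈ ℂ with λ ≠ -1, every integer n ≥ 1, every integer k with 1 ≤ k ≤ n, and every μ ∈ ℤ_{≥0}, the identity C(μn, n-k)/(k-1)! = Σ_{a=0}^{n} Σ_{b=k}^{n} Σ_{l₁+⋯+l_n = b-k} C(n, a) · C(a, n-b) · C(b-k; l₁,…,l_n) · C(b-1, k-1) · λ^a · (1/(b-1)!) · Π_{i=1}^{n} C_{l_i}(μ|λ) holds, where the inner sum is over all n-tuples (l₁,…,l_n) of nonnegative integers summing to b-k and C(b-k; l₁,…,l_n) = (b-k)!/(l₁!⋯l_n!) is the multinomial coefficient. -/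
open Finset PowerSeries

lemma sum_adT_succ {M : Type*} [AddCommMonoid M] (n m : ℕ) (f : (Fin (n+1) → ℕ) → M) :
    ∑ l ∈ Finset.Nat.antidiagonalTuple (n+1) m, f l =
      ∑ p ∈ Finset.HasAntidiagonal.antidiagonal m, ∑ x ∈ Finset.Nat.antidiagonalTuple n p.2,
        f (Fin.cons p.1 x) := by
  rw [Finset.sum_sigma']
  refine Finset.sum_nbij' (fun l => ⟨(l 0, m - l 0), Fin.tail l⟩)
    (fun q => Fin.cons q.1.1 q.2) ?_ ?_ ?_ ?_ ?_
  · intro l hl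
    rw [Finset.Nat.mem_antidiagonalTuple] at hl
    rw [Fin.sum_univ_succ] at hl
    simp only [Finset.mem_sigma, Finset.HasAntidiagonal.mem_antidiagonal, Finset.Nat.mem_antidiagonalTuple]
    constructor
    · omega
    · show ∑ i, Fin.tail l i = m - l 0
      simp only [Fin.tail]
      omega
  · intro q hq
    rw [Finset.mem_sigma, Finset.HasAntidiagonal.mem_antidiagonal, Finset.Nat.mem_antidiagonalTuple] at hq
    rw [Finset.Nat.mem_antidiagonalTuple, Fin.sum_univ_succ]
    simp only [Fin.cons_zero, Fin.cons_succ]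
    omega
  · intro l hl
    simp [Fin.cons_self_tail]
  · intro q hq
    rw [Finset.mem_sigma, Finset.HasAntidiagonal.mem_antidiagonal, Finset.Nat.mem_antidiagonalTuple] at hq
    ext1
    · simp only [Fin.cons_zero]
      exact Prod.ext rfl (by omega)
    · simp [Fin.tail_cons]
  · intro l hl; simp [Fin.cons_self_tail]

lemma coeff_pow_tuple (φ : PowerSeries ℂ) : ∀ (n m : ℕ),
    PowerSeries.coeff (R := ℂ) m (φ ^ n) =
      ∑ l ∈ Finset.Nat.antidiagonalTuple n m, ∏ i, PowerSeries.coeff (R := ℂ) (l i) φ := by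
  intro n
  induction n with
  | zero =>
    intro m
    cases m with
    | zero => simp
    | succ m => simp [Finset.Nat.antidiagonalTuple_zero_succ, PowerSeries.coeff_one]
  | succ n ih =>
    intro m
    rw [sum_adT_succ]
    rw [pow_succ', PowerSeries.coeff_mul]
    refine Finset.sum_congr rfl fun p hp => ?_
    rw [ih p.2, Finset.mul_sum]
    refine Finset.sum_congr rfl fun x hx => ?_
    rw [Fin.prod_univ_succ]
    simp [Fin.cons_zero, Fin.cons_succ]

lemma coeff_one_add_X_pow_ps (N j : ℕ) :
    PowerSeries.coeff (R := ℂ) j ((1 + PowerSeries.X) ^ N) = (N.choose j : ℂ) := by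
  have h : ((1 + PowerSeries.X : PowerSeries ℂ)) ^ N =
      (((1 + Polynomial.X : Polynomial ℂ) ^ N : Polynomial ℂ) : PowerSeries ℂ) := by
    rw [Polynomial.coe_pow, Polynomial.coe_add, Polynomial.coe_one, Polynomial.coe_X]
  rw [h, Polynomial.coeff_coe, Polynomial.coeff_one_add_X_pow]

/-- For `λ ≠ -1`, `n ≥ 1`, `1 ≤ k ≤ n` and `μ ∈ ℤ_{≥0}`,
`C(μn, n-k)/(k-1)! = ∑_{a=0}^{n} ∑_{b=k}^{n} ∑_{l₁+⋯+l_n = b-k}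
  C(n,a) C(a,n-b) C(b-k; l₁,…,l_n) C(b-1,k-1) λ^a (1/(b-1)!) ∏_{i=1}^{n} C_{l_i}(μ|λ)`,
where the Changhee polynomials of the second kind are characterized (for `x = μ` a
nonnegative integer) by `∑_{k≥0} C_k(μ|λ) t^k/k! = (1+t)^μ/(1+λ(1+t))`, i.e.
`(1+λ(1+t)) ∑_{k≥0} C_k(μ|λ) t^k/k! = (1+t)^μ`, and `C(b-k; l₁,…,l_n)` is the
multinomial coefficient. -/
theorem stmt9 (lam : ℂ) (hlam : lam ≠ -1) (n : ℕ) (hn : 1 ≤ n) (k : ℕ)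
    (hk1 : 1 ≤ k) (hkn : k ≤ n) (μ : ℕ)
    (Ch : ℕ → ℕ → ℂ)
    (hCh : ∀ m : ℕ,
      (PowerSeries.C (R := ℂ) (1 + lam) + PowerSeries.C (R := ℂ) lam * PowerSeries.X) *
          PowerSeries.mk (fun j => Ch m j / (j.factorial : ℂ)) =
        (1 + PowerSeries.X) ^ m) :
    ((μ * n).choose (n - k) : ℂ) / ((k - 1).factorial : ℂ) =
      ∑ a ∈ Finset.range (n + 1), ∑ b ∈ Finset.Icc k n,
        ∑ l ∈ Finset.Nat.antidiagonalTuple n (b - k),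
          (n.choose a : ℂ) * (a.choose (n - b) : ℂ) *
            (Nat.multinomial Finset.univ l : ℂ) * ((b - 1).choose (k - 1) : ℂ) *
            lam ^ a * (1 / ((b - 1).factorial : ℂ)) *
            ∏ i : Fin n, Ch μ (l i) := by
  set F : PowerSeries ℂ := PowerSeries.mk (fun j => Ch μ j / (j.factorial : ℂ)) with hF
  set G : PowerSeries ℂ :=
    PowerSeries.C (R := ℂ) (1 + lam) + PowerSeries.C (R := ℂ) lam * PowerSeries.X with hG
  have hGF : G ^ n * F ^ n = (1 + PowerSeries.X) ^ (μ * n) := by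
    rw [← mul_pow, hCh μ, ← pow_mul, Nat.mul_comm μ n]
  -- coefficient of G^n
  have hGn : ∀ j : ℕ, PowerSeries.coeff (R := ℂ) j (G ^ n) =
      ∑ a ∈ Finset.range (n + 1), (n.choose a : ℂ) * lam ^ a * (a.choose j : ℂ) := by
    intro j
    have hG2 : G = 1 + PowerSeries.C (R := ℂ) lam * (1 + PowerSeries.X) := by
      rw [hG, map_add, map_one]; ring
    rw [hG2, add_comm (1 : PowerSeries ℂ), add_pow, map_sum]
    refine Finset.sum_congr rfl fun a ha => ?_
    have hterm : (PowerSeries.C (R := ℂ) lam * (1 + PowerSeries.X)) ^ a * (1 : PowerSeries ℂ) ^ (n - a) *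
        ((n.choose a : ℕ) : PowerSeries ℂ)
        = PowerSeries.C (R := ℂ) (lam ^ a * (n.choose a : ℂ)) * (1 + PowerSeries.X) ^ a := by
      rw [one_pow, mul_pow, ← map_pow, map_mul, map_natCast]
      ring
    rw [hterm, PowerSeries.coeff_C_mul, coeff_one_add_X_pow_ps]
    ring
  -- coefficient of F^n
  have hFn : ∀ m : ℕ, PowerSeries.coeff (R := ℂ) m (F ^ n) =
      ∑ l ∈ Finset.Nat.antidiagonalTuple n m, ∏ i, (Ch μ (l i) / ((l i).factorial : ℂ)) := by
    intro m
    rw [coeff_pow_tuple]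
    refine Finset.sum_congr rfl fun l hl => Finset.prod_congr rfl fun i _ => ?_
    rw [hF, PowerSeries.coeff_mk]
  -- per-term identity
  have key : ∀ b ∈ Finset.Icc k n, ∀ l ∈ Finset.Nat.antidiagonalTuple n (b - k),
      (Nat.multinomial Finset.univ l : ℂ) * ((b - 1).choose (k - 1) : ℂ) *
        (1 / ((b - 1).factorial : ℂ)) * ∏ i : Fin n, Ch μ (l i)
      = (1 / ((k - 1).factorial : ℂ)) *
        ∏ i : Fin n, (Ch μ (l i) / ((l i).factorial : ℂ)) := by
    intro b hb l hl
    rw [Finset.mem_Icc] at hb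
    have hsum : ∑ i, l i = b - k := Finset.Nat.mem_antidiagonalTuple.mp hl
    have h1 : (∏ i, (((l i).factorial : ℕ) : ℂ)) * (Nat.multinomial Finset.univ l : ℂ) =
        (((b - k).factorial : ℕ) : ℂ) := by
      rw [← Nat.cast_prod, ← Nat.cast_mul, Nat.multinomial_spec, hsum]
    have h2 : (((k - 1).factorial : ℕ) : ℂ) * (((b - k).factorial : ℕ) : ℂ) *
        (((b - 1).choose (k - 1) : ℕ) : ℂ) = (((b - 1).factorial : ℕ) : ℂ) := by
      have hble : k - 1 ≤ b - 1 := by omega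
      have hc := Nat.choose_mul_factorial_mul_factorial hble
      have heq : b - 1 - (k - 1) = b - k := by omega
      rw [heq] at hc
      push_cast [← hc]; ring
    have hprodne : (∏ i, (((l i).factorial : ℕ) : ℂ)) ≠ 0 :=
      Finset.prod_ne_zero_iff.mpr fun i _ => Nat.cast_ne_zero.mpr (Nat.factorial_ne_zero _)
    have hb1 : (((b - 1).factorial : ℕ) : ℂ) ≠ 0 := Nat.cast_ne_zero.mpr (Nat.factorial_ne_zero _)
    have hk1' : (((k - 1).factorial : ℕ) : ℂ) ≠ 0 := Nat.cast_ne_zero.mpr (Nat.factorial_ne_zero _)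
    rw [Finset.prod_div_distrib]
    field_simp
    linear_combination ((((b - 1).choose (k - 1) : ℕ) : ℂ) * (((k - 1).factorial : ℕ) : ℂ) *
        (∏ i : Fin n, Ch μ (l i))) * h1 + (∏ i : Fin n, Ch μ (l i)) * h2
  -- assemble
  rw [Finset.sum_comm]
  have step : ∀ b ∈ Finset.Icc k n,
      (∑ a ∈ Finset.range (n + 1), ∑ l ∈ Finset.Nat.antidiagonalTuple n (b - k),
        (n.choose a : ℂ) * (a.choose (n - b) : ℂ) *
          (Nat.multinomial Finset.univ l : ℂ) * ((b - 1).choose (k - 1) : ℂ) *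
          lam ^ a * (1 / ((b - 1).factorial : ℂ)) *
          ∏ i : Fin n, Ch μ (l i))
      = (1 / ((k - 1).factorial : ℂ)) *
        (PowerSeries.coeff (R := ℂ) (n - b) (G ^ n) * PowerSeries.coeff (R := ℂ) (b - k) (F ^ n)) := by
    intro b hb
    rw [hGn, hFn, Finset.sum_mul_sum, Finset.mul_sum]
    refine Finset.sum_congr rfl fun a ha => ?_
    rw [Finset.mul_sum]
    apply Finset.sum_congr rfl
    intro l hl
    have := key b hb l hl
    calc (n.choose a : ℂ) * (a.choose (n - b) : ℂ) *
          (Nat.multinomial Finset.univ l : ℂ) * ((b - 1).choose (k - 1) : ℂ) *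
          lam ^ a * (1 / ((b - 1).factorial : ℂ)) * ∏ i : Fin n, Ch μ (l i)
        = ((n.choose a : ℂ) * lam ^ a * (a.choose (n - b) : ℂ)) *
            ((Nat.multinomial Finset.univ l : ℂ) * ((b - 1).choose (k - 1) : ℂ) *
              (1 / ((b - 1).factorial : ℂ)) * ∏ i : Fin n, Ch μ (l i)) := by ring
      _ = ((n.choose a : ℂ) * lam ^ a * (a.choose (n - b) : ℂ)) *
            ((1 / ((k - 1).factorial : ℂ)) *
              ∏ i : Fin n, (Ch μ (l i) / ((l i).factorial : ℂ))) := by rw [this]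
      _ = (1 / ((k - 1).factorial : ℂ)) *
            ((n.choose a : ℂ) * lam ^ a * (a.choose (n - b) : ℂ) *
              ∏ i : Fin n, (Ch μ (l i) / ((l i).factorial : ℂ))) := by ring
  rw [Finset.sum_congr rfl step, ← Finset.mul_sum]
  have reidx : (∑ b ∈ Finset.Icc k n,
      PowerSeries.coeff (R := ℂ) (n - b) (G ^ n) * PowerSeries.coeff (R := ℂ) (b - k) (F ^ n))
      = PowerSeries.coeff (R := ℂ) (n - k) (G ^ n * F ^ n) := by
    rw [PowerSeries.coeff_mul]
    refine Finset.sum_nbij' (fun b => (n - b, b - k)) (fun p => n - p.1) ?_ ?_ ?_ ?_ ?_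
    · intro b hb
      rw [Finset.mem_Icc] at hb
      rw [Finset.HasAntidiagonal.mem_antidiagonal]
      omega
    · intro p hp
      rw [Finset.HasAntidiagonal.mem_antidiagonal] at hp
      rw [Finset.mem_Icc]
      omega
    · intro b hb
      rw [Finset.mem_Icc] at hb
      dsimp only
      omega
    · intro p hp
      rw [Finset.HasAntidiagonal.mem_antidiagonal] at hp
      exact Prod.ext (by dsimp only; omega) (by dsimp only; omega)
    · intro b hb
      rfl
  rw [reidx, hGF, coeff_one_add_X_pow_ps]
  ring
end

section
/- For every λ ∈ ℂ with λ ≠ 1 and every k ∈ ℤ_{≥0}, the k-th Frobenius–Euler number satisfies H_k(λ) = Σ_{l=0}^{k} (1/(λ-1))^l · l! · S₂(k, l). -/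
/-- For `λ ≠ 1` and every `k ∈ ℤ_{≥0}`,
`H_k(λ) = ∑_{l=0}^{k} (1/(λ-1))^l l! S₂(k,l)`, where the Frobenius–Euler numbers
`H_m(λ)` are characterized by `(1-λ)/(e^t-λ) = ∑_m H_m(λ) t^m/m!`, i.e.
`(e^t-λ) ∑_m H_m(λ) t^m/m! = 1-λ`, and the Stirling numbers of the second kind
`S₂(l,m)` by `(e^t-1)^m = m! ∑_l S₂(l,m) t^l/l!`. -/
theorem stmt10 (lam : ℂ) (hlam : lam ≠ 1) (k : ℕ)
    (H : ℕ → ℂ)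
    (hH : (expPS 1 - PowerSeries.C lam) *
          PowerSeries.mk (fun m => H m / (m.factorial : ℂ)) =
        PowerSeries.C (1 - lam))
    (S2 : ℕ → ℕ → ℂ)
    (hS2 : ∀ m : ℕ,
      (expPS 1 - 1) ^ m =
        PowerSeries.C (m.factorial : ℂ) *
          PowerSeries.mk (fun l => S2 l m / (l.factorial : ℂ))) :
    H k = ∑ l ∈ Finset.range (k + 1), (1 / (lam - 1)) ^ l * (l.factorial : ℂ) * S2 k l := by
  classical
  have hlam' : lam - 1 ≠ 0 := sub_ne_zero.mpr hlam
  set u : ℂ := 1 / (lam - 1) with hu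
  set a : PowerSeries ℂ := PowerSeries.C u * (expPS 1 - 1) with ha
  -- coefficient of a^l
  have hcoeffa : ∀ (l n : ℕ),
      PowerSeries.coeff n (a ^ l) = u ^ l * ((l.factorial : ℂ) * (S2 n l / (n.factorial : ℂ))) := by
    intro l n
    rw [ha, mul_pow, ← map_pow, hS2 l, ← mul_assoc, ← map_mul, PowerSeries.coeff_C_mul,
      PowerSeries.coeff_mk]
    ring
  have hazero : ∀ l n : ℕ, n < l → PowerSeries.coeff n (a ^ l) = 0 := by
    intro l n hn
    have hX : PowerSeries.X ∣ a := by
      rw [PowerSeries.X_dvd_iff]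
      simp [ha, expPS]
    have hd := pow_dvd_pow_of_dvd hX l
    rw [PowerSeries.X_pow_dvd_iff] at hd
    exact hd n hn
  -- the candidate series
  set G : PowerSeries ℂ := PowerSeries.mk (fun n =>
    (∑ l ∈ Finset.range (n + 1), u ^ l * (l.factorial : ℂ) * S2 n l) / (n.factorial : ℂ))
    with hG
  -- G agrees with partial geometric sums
  have hGcoeff : ∀ (N n : ℕ), n ≤ N →
      PowerSeries.coeff n G = PowerSeries.coeff n (∑ l ∈ Finset.range (N + 1), a ^ l) := by
    intro N n hn
    rw [map_sum]
    have h1 : ∑ l ∈ Finset.range (N + 1), PowerSeries.coeff n (a ^ l)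
        = ∑ l ∈ Finset.range (n + 1), PowerSeries.coeff n (a ^ l) := by
      refine (Finset.sum_subset (Finset.range_subset_range.mpr (by omega)) ?_).symm
      intro l hl hl'
      exact hazero l n (by simp at hl'; omega)
    rw [h1, hG, PowerSeries.coeff_mk, Finset.sum_div]
    apply Finset.sum_congr rfl
    intro l _
    rw [hcoeffa]
    ring
  -- key identity: (1 - a) * G = 1
  have hkey : (1 - a) * G = 1 := by
    ext n
    have : PowerSeries.coeff n ((1 - a) * G)
        = PowerSeries.coeff n ((1 - a) * ∑ l ∈ Finset.range (n + 1), a ^ l) := by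
      rw [PowerSeries.coeff_mul, PowerSeries.coeff_mul]
      apply Finset.sum_congr rfl
      intro p hp
      rw [Finset.HasAntidiagonal.mem_antidiagonal] at hp
      rw [hGcoeff n p.2 (by omega)]
    rw [this]
    have hgeom : (1 - a) * ∑ l ∈ Finset.range (n + 1), a ^ l = 1 - a ^ (n + 1) := by
      have := geom_sum_mul a (n + 1)
      linear_combination -this
    rw [hgeom, map_sub, hazero (n + 1) n (by omega), sub_zero]
  -- rewrite e^t - C λ
  have hfac : expPS 1 - PowerSeries.C lam = PowerSeries.C (lam - 1) * (a - 1) := by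
    rw [ha, mul_sub, ← mul_assoc, ← map_mul, mul_one]
    have : (lam - 1) * u = 1 := by
      rw [hu]; field_simp
    rw [this, map_one, one_mul, map_sub, map_one]
    ring
  -- (e^t - C λ) * G = C (1 - λ)
  have hG2 : (expPS 1 - PowerSeries.C lam) * G = PowerSeries.C (1 - lam) := by
    rw [hfac, mul_assoc]
    have : (a - 1) * G = -1 := by
      have : (a - 1) * G = -((1 - a) * G) := by ring
      rw [this, hkey]
    rw [this]
    simp [← map_neg]
  -- cancellation
  have hne : expPS 1 - PowerSeries.C lam ≠ 0 := by
    intro h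
    have : PowerSeries.constantCoeff (expPS 1 - PowerSeries.C lam) = 0 := by
      rw [h]; simp
    rw [map_sub, PowerSeries.constantCoeff_C] at this
    have h1 : PowerSeries.constantCoeff (expPS 1) = 1 := by simp [expPS]
    rw [h1] at this
    exact hlam (by linear_combination -this)
  have hFG : PowerSeries.mk (fun m => H m / (m.factorial : ℂ)) = G := by
    apply mul_left_cancel₀ hne
    rw [hH, hG2]
  have := congrArg (PowerSeries.coeff k) hFG
  rw [PowerSeries.coeff_mk, hG, PowerSeries.coeff_mk] at this
  have hfk : (k.factorial : ℂ) ≠ 0 := Nat.cast_ne_zero.mpr k.factorial_ne_zero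
  field_simp at this
  rw [this]
end
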